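/- arXiv:2109.08386 — 6 statements merged into one kernel-verified Lean document; each statement's English description precedes it below -/
import Mathlib

section
/- For every matrix Q ∈ ℝ^{p×m}, there exists an upper triangular matrix U ∈ ℝ^{m×m} with ones on the diagonal and an invertible lower triangular matrix L ∈ ℝ^{p×p} such that LQU is in canonical form. -/
section helpers

lemma lowTri_mul {n : ℕ} {A B : Matrix (Fin n) (Fin n) ℝ}
    (hA : ∀ i j, i < j → A i j = 0) (hB : ∀ i j, i < j → B i j = 0) :
    (∀ i j, i < j → (A * B) i j = 0) ∧ ∀ i, (A * B) i i = A i i * B i i := by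
  constructor
  · intro i j hij
    rw [Matrix.mul_apply]
    apply Finset.sum_eq_zero
    intro k _
    rcases lt_or_ge i k with h | h
    · rw [hA i k h, zero_mul]
    · rw [hB k j (lt_of_le_of_lt h hij), mul_zero]
  · intro i
    rw [Matrix.mul_apply]
    apply Finset.sum_eq_single i
    · intro k _ hk
      rcases lt_or_ge i k with h | h
      · rw [hA i k h, zero_mul]
      · rw [hB k i (lt_of_le_of_ne h hk), mul_zero]
    · intro h; exact absurd (Finset.mem_univ i) h

lemma upTri_mul {n : ℕ} {A B : Matrix (Fin n) (Fin n) ℝ}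
    (hA : ∀ i j, j < i → A i j = 0) (hB : ∀ i j, j < i → B i j = 0) :
    (∀ i j, j < i → (A * B) i j = 0) ∧ ∀ i, (A * B) i i = A i i * B i i := by
  constructor
  · intro i j hij
    rw [Matrix.mul_apply]
    apply Finset.sum_eq_zero
    intro k _
    rcases lt_or_ge k i with h | h
    · rw [hA i k h, zero_mul]
    · rw [hB k j (lt_of_lt_of_le hij h), mul_zero]
  · intro i
    rw [Matrix.mul_apply]
    apply Finset.sum_eq_single i
    · intro k _ hk
      rcases lt_or_ge k i with h | h
      · rw [hA i k h, zero_mul]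
      · rw [hB k i (lt_of_le_of_ne h (Ne.symm hk)), mul_zero]
    · intro h; exact absurd (Finset.mem_univ i) h

def ext {p : ℕ} (L' : Matrix (Fin p) (Fin p) ℝ) : Matrix (Fin (p + 1)) (Fin (p + 1)) ℝ :=
  Matrix.of (Fin.cons (Fin.cons 1 0) (fun i => Fin.cons 0 (L' i)))

@[simp] lemma ext_zero_zero {p : ℕ} (L' : Matrix (Fin p) (Fin p) ℝ) : ext L' 0 0 = 1 := rfl
@[simp] lemma ext_zero_succ {p : ℕ} (L' : Matrix (Fin p) (Fin p) ℝ) (j : Fin p) :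
    ext L' 0 j.succ = 0 := rfl
@[simp] lemma ext_succ_zero {p : ℕ} (L' : Matrix (Fin p) (Fin p) ℝ) (i : Fin p) :
    ext L' i.succ 0 = 0 := by simp [ext]
@[simp] lemma ext_succ_succ {p : ℕ} (L' : Matrix (Fin p) (Fin p) ℝ) (i j : Fin p) :
    ext L' i.succ j.succ = L' i j := by simp [ext]

lemma ext_mul_zero {p m : ℕ} (L' : Matrix (Fin p) (Fin p) ℝ)
    (M : Matrix (Fin (p + 1)) (Fin m) ℝ) (k : Fin m) :
    (ext L' * M) 0 k = M 0 k := by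
  rw [Matrix.mul_apply, Fin.sum_univ_succ]
  simp

lemma ext_mul_succ {p m : ℕ} (L' : Matrix (Fin p) (Fin p) ℝ)
    (M : Matrix (Fin (p + 1)) (Fin m) ℝ) (i : Fin p) (k : Fin m) :
    (ext L' * M) i.succ k = (L' * Matrix.of (fun (i : Fin p) (j : Fin m) => M i.succ j)) i k := by
  rw [Matrix.mul_apply, Fin.sum_univ_succ, Matrix.mul_apply]
  simp

lemma ext_low {p : ℕ} {L' : Matrix (Fin p) (Fin p) ℝ}
    (h1 : ∀ i j, i < j → L' i j = 0) (h2 : ∀ i, L' i i ≠ 0) :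
    (∀ i j : Fin (p+1), i < j → ext L' i j = 0) ∧ ∀ i, ext L' i i ≠ 0 := by
  constructor
  · intro i j hij
    induction i using Fin.cases with
    | zero =>
      induction j using Fin.cases with
      | zero => exact absurd hij (lt_irrefl _)
      | succ j => simp
    | succ i =>
      induction j using Fin.cases with
      | zero => exact absurd hij (Fin.not_lt_zero _)
      | succ j =>
        rw [ext_succ_succ]
        exact h1 i j (Fin.succ_lt_succ_iff.mp hij)
  · intro i
    induction i using Fin.cases with
    | zero => simp
    | succ i => simpa using h2 i

end helpers

section pivot

variable {m : ℕ}

/-- Column-operation matrix clearing row `0` using pivot column `c`. -/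
noncomputable def U0mat (v : Fin m → ℝ) (c : Fin m) : Matrix (Fin m) (Fin m) ℝ :=
  Matrix.of fun j k => if j = k then 1 else if j = c then -(v k) / v c else 0

lemma U0_diag (v : Fin m → ℝ) (c : Fin m) : ∀ j, U0mat v c j j = 1 := by
  intro j; simp [U0mat]

lemma U0_up {v : Fin m → ℝ} {c : Fin m} (hmin : ∀ k, k < c → v k = 0) :
    ∀ j k, k < j → U0mat v c j k = 0 := by
  intro j k hk
  simp only [U0mat, Matrix.of_apply]
  rw [if_neg (ne_of_gt hk)]
  split
  · next h => rw [hmin k (h ▸ hk), neg_zero, zero_div]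
  · rfl

lemma mul_U0_apply {p' : ℕ} (Q : Matrix (Fin p') (Fin m) ℝ) (v : Fin m → ℝ) (c : Fin m)
    (i : Fin p') (k : Fin m) :
    (Q * U0mat v c) i k = if k = c then Q i c else Q i k - Q i c * v k / v c := by
  rw [Matrix.mul_apply]
  split
  · next h =>
    subst h
    rw [Finset.sum_eq_single k
      (fun j _ hj => by
        simp only [U0mat, Matrix.of_apply]
        rw [if_neg hj, if_neg hj, mul_zero])
      (fun h => absurd (Finset.mem_univ k) h)]
    simp [U0mat]
  · next h =>
    have hsum : ∀ j : Fin m, Q i j * U0mat v c j k =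
        (if j = k then Q i k else 0) + (if j = c then Q i c * (-(v k) / v c) else 0) := by
      intro j
      simp only [U0mat, Matrix.of_apply]
      split_ifs <;> simp_all <;> ring
    rw [Finset.sum_congr rfl (fun j _ => hsum j), Finset.sum_add_distrib,
      Finset.sum_ite_eq' Finset.univ k (fun _ => Q i k),
      Finset.sum_ite_eq' Finset.univ c (fun _ => Q i c * (-(v k) / v c))]
    simp only [Finset.mem_univ, if_pos]
    ring

/-- Row-operation matrix scaling row `0` by `(w 0)⁻¹` and clearing column entries below. -/
noncomputable def L0mat {p : ℕ} (w : Fin (p + 1) → ℝ) : Matrix (Fin (p + 1)) (Fin (p + 1)) ℝ :=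
  Matrix.of fun i j =>
    if i = j then (if i = 0 then (w 0)⁻¹ else 1) else if j = 0 then -(w i) * (w 0)⁻¹ else 0

lemma L0_low {p : ℕ} (w : Fin (p + 1) → ℝ) : ∀ i j, i < j → L0mat w i j = 0 := by
  intro i j hij
  simp only [L0mat, Matrix.of_apply]
  rw [if_neg (ne_of_lt hij),
    if_neg (by intro h; subst h; exact absurd hij (Fin.not_lt_zero i))]

lemma L0_diag {p : ℕ} (w : Fin (p + 1) → ℝ) :
    ∀ i, L0mat w i i = if i = 0 then (w 0)⁻¹ else 1 := by
  intro i; simp [L0mat]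

lemma L0_mul_apply {p : ℕ} (w : Fin (p + 1) → ℝ) (M : Matrix (Fin (p + 1)) (Fin m) ℝ)
    (i : Fin (p + 1)) (k : Fin m) :
    (L0mat w * M) i k =
      if i = 0 then (w 0)⁻¹ * M 0 k else M i k - w i * (w 0)⁻¹ * M 0 k := by
  rw [Matrix.mul_apply]
  split
  · next h =>
    subst h
    rw [Finset.sum_eq_single 0
      (fun j _ hj => by
        simp only [L0mat, Matrix.of_apply]
        rw [if_neg (fun h2 => hj h2.symm), if_neg hj, zero_mul])
      (fun h => absurd (Finset.mem_univ _) h)]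
    simp [L0mat]
  · next h =>
    have hsum : ∀ j : Fin (p + 1), L0mat w i j * M j k =
        (if j = i then M i k else 0) + (if j = 0 then -(w i) * (w 0)⁻¹ * M 0 k else 0) := by
      intro j
      by_cases h1 : j = i
      · subst h1
        simp only [L0mat, Matrix.of_apply]
        rw [if_true, if_neg h, one_mul, if_true, if_neg h, add_zero]
      · by_cases h2 : j = 0
        · subst h2
          simp only [L0mat, Matrix.of_apply]
          rw [if_neg h, if_true, if_neg h1, if_true, zero_add]
        · simp only [L0mat, Matrix.of_apply]
          rw [if_neg (fun e => h1 e.symm), if_neg h2, zero_mul, if_neg h1, if_neg h2, add_zero]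
    rw [Finset.sum_congr rfl (fun j _ => hsum j), Finset.sum_add_distrib,
      Finset.sum_ite_eq' Finset.univ i (fun _ => M i k),
      Finset.sum_ite_eq' Finset.univ (0 : Fin (p + 1)) (fun _ => -(w i) * (w 0)⁻¹ * M 0 k)]
    simp only [Finset.mem_univ, if_pos]
    ring

end pivot


/-- A matrix is in canonical form if it is zero, or its nonzero entries are all equal
to `1` and located at positions `(r k, c k)` with `r` strictly increasing and `c`
injective. -/
def IsCanonicalForm {p m : ℕ} (Q : Matrix (Fin p) (Fin m) ℝ) : Prop :=
  Q = 0 ∨ ∃ ρ : ℕ, 0 < ρ ∧ ∃ (r : Fin ρ → Fin p) (c : Fin ρ → Fin m),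
    StrictMono r ∧ Function.Injective c ∧
    (∀ k, Q (r k) (c k) = 1) ∧
    (∀ i j, (∀ k, ¬(i = r k ∧ j = c k)) → Q i j = 0)

lemma lcu_aux (m : ℕ) : ∀ (p : ℕ) (Q : Matrix (Fin p) (Fin m) ℝ),
    ∃ (U : Matrix (Fin m) (Fin m) ℝ) (L : Matrix (Fin p) (Fin p) ℝ),
      (∀ i j, j < i → U i j = 0) ∧ (∀ i, U i i = 1) ∧
      (∀ i j, i < j → L i j = 0) ∧ (∀ i, L i i ≠ 0) ∧
      IsCanonicalForm (L * Q * U) ∧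
      (∀ j, (∀ i, Q i j = 0) → (∀ i, (L * Q * U) i j = 0) ∧ ∀ k, k ≠ j → U j k = 0) := by
  intro p
  induction p with
  | zero =>
    intro Q
    refine ⟨1, 1, fun i j h => Matrix.one_apply_ne (ne_of_lt h).symm,
      fun i => Matrix.one_apply_eq i, fun i _ _ => i.elim0, fun i => i.elim0, ?_, ?_⟩
    · left
      exact Matrix.ext fun i _ => i.elim0
    · intro j _
      exact ⟨fun i => i.elim0, fun k hk => Matrix.one_apply_ne (Ne.symm hk)⟩
  | succ p ih =>
    intro Q
    by_cases hrow : ∀ j, Q 0 j = 0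
    · -- Case A : first row is zero
      obtain ⟨U', L', hU'up, hU'd, hL'low, hL'd, hcan', hzc'⟩ :=
        ih (Matrix.of (fun (i : Fin p) (j : Fin m) => Q i.succ j))
      have hC0 : ∀ k, (ext L' * Q * U') 0 k = 0 := by
        intro k
        rw [Matrix.mul_apply]
        apply Finset.sum_eq_zero
        intro j _
        rw [ext_mul_zero, hrow j, zero_mul]
      have hCs : ∀ i k, (ext L' * Q * U') i.succ k =
          (L' * Matrix.of (fun (i : Fin p) (j : Fin m) => Q i.succ j) * U') i k := by
        intro i k
        rw [Matrix.mul_apply, Matrix.mul_apply]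
        apply Finset.sum_congr rfl
        intro j _
        rw [ext_mul_succ]
      refine ⟨U', ext L', hU'up, hU'd, (ext_low hL'low hL'd).1, (ext_low hL'low hL'd).2, ?_, ?_⟩
      · rcases hcan' with h0 | ⟨ρ, hρ, r, c, hmono, hinj, hone, hzero⟩
        · left
          refine Matrix.ext fun i k => ?_
          rw [Matrix.zero_apply]
          induction i using Fin.cases with
          | zero => exact hC0 k
          | succ i => rw [hCs, h0, Matrix.zero_apply]
        · right
          refine ⟨ρ, hρ, Fin.succ ∘ r, c,
            fun a b h => Fin.succ_lt_succ_iff.mpr (hmono h), hinj,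
            fun k => by rw [Function.comp_apply, hCs]; exact hone k, ?_⟩
          intro i j hij
          induction i using Fin.cases with
          | zero => exact hC0 j
          | succ i =>
            rw [hCs]
            exact hzero i j fun k hk => hij k ⟨by rw [hk.1]; rfl, hk.2⟩
      · intro j hj
        obtain ⟨h1, h2⟩ := hzc' j (fun i => hj i.succ)
        refine ⟨fun i => ?_, h2⟩
        induction i using Fin.cases with
        | zero => exact hC0 j
        | succ i => rw [hCs]; exact h1 i
    · -- Case B : first row nonzero
      push_neg at hrow
      have hne : (Finset.univ.filter (fun j => Q 0 j ≠ 0)).Nonempty := by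
        obtain ⟨j, hj⟩ := hrow
        exact ⟨j, by simp [hj]⟩
      obtain ⟨c, hc⟩ : ∃ c, c = (Finset.univ.filter (fun j => Q 0 j ≠ 0)).min' hne := ⟨_, rfl⟩
      have hac : Q 0 c ≠ 0 := by
        have h := Finset.min'_mem _ hne
        rw [← hc] at h
        exact (Finset.mem_filter.mp h).2
      have hmin : ∀ k, k < c → Q 0 k = 0 := by
        intro k hk
        by_contra h
        have hle := Finset.min'_le (Finset.univ.filter (fun j => Q 0 j ≠ 0)) k (by simp [h])
        rw [← hc] at hle
        exact absurd hle (not_le.mpr hk)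
      set U₀ := U0mat (Q 0) c with hU₀
      set M := Q * U₀ with hM
      set w : Fin (p + 1) → ℝ := fun i => M i c with hw
      set L₀ := L0mat w with hL₀
      set M₁ := L₀ * M with hM₁
      have hM0 : ∀ k, M 0 k = if k = c then Q 0 c else 0 := by
        intro k
        rw [hM, hU₀, mul_U0_apply]
        split
        · rfl
        · rw [mul_div_cancel_left₀ _ hac, sub_self]
      have hw0 : w 0 = Q 0 c := by
        simp only [hw]
        rw [hM0, if_pos rfl]
      have hM₁app : ∀ i k, M₁ i k =
          if i = 0 then (Q 0 c)⁻¹ * M 0 k else M i k - w i * (Q 0 c)⁻¹ * M 0 k := by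
        intro i k
        rw [hM₁, hL₀, L0_mul_apply, hw0]
      have hM₁0 : ∀ k, M₁ 0 k = if k = c then 1 else 0 := by
        intro k
        rw [hM₁app, if_pos rfl, hM0]
        by_cases hkc : k = c
        · rw [if_pos hkc, if_pos hkc]
          exact inv_mul_cancel₀ hac
        · rw [if_neg hkc, if_neg hkc, mul_zero]
      have hM₁c : ∀ i, i ≠ 0 → M₁ i c = 0 := by
        intro i hi
        rw [hM₁app, if_neg hi, hM0, if_pos rfl]
        have hwi : w i = M i c := by simp only [hw]
        rw [← hwi, mul_assoc, inv_mul_cancel₀ hac, mul_one, sub_self]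
      have hzcM₁ : ∀ j, (∀ i, Q i j = 0) → ∀ i, M₁ i j = 0 := by
        intro j hj
        have hjc : j ≠ c := fun e => hac (e ▸ hj 0)
        have hMj : ∀ i, M i j = 0 := by
          intro i
          rw [hM, hU₀, mul_U0_apply, if_neg hjc, hj i, hj 0]
          simp
        intro i
        rw [hM₁app]
        split <;> simp [hMj]
      obtain ⟨U', L', hU'up, hU'd, hL'low, hL'd, hcan', hzc'⟩ :=
        ih (Matrix.of (fun (i : Fin p) (j : Fin m) => M₁ i.succ j))
      obtain ⟨hC'c, hU'c⟩ := hzc' c (fun i => hM₁c i.succ (Fin.succ_ne_zero i))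
      have hE : (ext L' * L₀) * Q * (U₀ * U') = ext L' * M₁ * U' := by
        rw [hM₁, hM]
        simp only [Matrix.mul_assoc]
      have hN0 : ∀ k, (ext L' * M₁ * U') 0 k = if k = c then 1 else 0 := by
        intro k
        rw [Matrix.mul_apply]
        rw [Finset.sum_congr rfl
          (fun j _ => by rw [ext_mul_zero, hM₁0] :
            ∀ j ∈ Finset.univ, (ext L' * M₁) 0 j * U' j k = (if j = c then 1 else 0) * U' j k)]
        rw [Finset.sum_eq_single c (fun j _ hj => by rw [if_neg hj, zero_mul])
          (fun h => absurd (Finset.mem_univ _) h), if_pos rfl, one_mul]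
        by_cases hkc : k = c
        · rw [if_pos hkc, hkc, hU'd]
        · rw [if_neg hkc, hU'c k hkc]
      have hCs : ∀ (i : Fin p) k, (ext L' * M₁ * U') i.succ k =
          (L' * Matrix.of (fun (i : Fin p) (j : Fin m) => M₁ i.succ j) * U') i k := by
        intro i k
        rw [Matrix.mul_apply, Matrix.mul_apply]
        exact Finset.sum_congr rfl (fun j _ => by rw [ext_mul_succ])
      have hU₀up : ∀ i j, j < i → U₀ i j = 0 := by rw [hU₀]; exact U0_up hmin
      have hU₀d : ∀ i, U₀ i i = 1 := by rw [hU₀]; exact U0_diag _ _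
      have hL₀low : ∀ i j, i < j → L₀ i j = 0 := by rw [hL₀]; exact L0_low w
      have hL₀d : ∀ i, L₀ i i ≠ 0 := by
        rw [hL₀]
        intro i
        rw [L0_diag]
        split
        · rw [hw0]
          exact inv_ne_zero hac
        · exact one_ne_zero
      refine ⟨U₀ * U', ext L' * L₀,
        (upTri_mul hU₀up hU'up).1,
        fun i => by rw [(upTri_mul hU₀up hU'up).2 i, hU₀d, hU'd, one_mul],
        (lowTri_mul (ext_low hL'low hL'd).1 hL₀low).1,
        fun i => by
          rw [(lowTri_mul (ext_low hL'low hL'd).1 hL₀low).2 i]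
          exact mul_ne_zero ((ext_low hL'low hL'd).2 i) (hL₀d i),
        ?_, ?_⟩
      · rw [hE]
        rcases hcan' with h0 | ⟨ρ, hρ, r, cc, hmono, hinj, hone, hzero⟩
        · right
          refine ⟨1, one_pos, fun _ => 0, fun _ => c, ?_, ?_,
            fun k => by simpa using hN0 c, ?_⟩
          · intro a b hab
            rw [Subsingleton.elim a b] at hab
            exact absurd hab (lt_irrefl b)
          · intro a b _
            exact Subsingleton.elim a b
          · intro i j hij
            induction i using Fin.cases with
            | zero =>
              have hjc : j ≠ c := fun e => hij 0 ⟨rfl, e⟩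
              rw [hN0, if_neg hjc]
            | succ i =>
              rw [hCs, h0, Matrix.zero_apply]
        · right
          refine ⟨ρ + 1, Nat.succ_pos ρ, Fin.cases 0 (Fin.succ ∘ r), Fin.cases c cc,
            ?_, ?_, ?_, ?_⟩
          · intro x y hxy
            induction x using Fin.cases with
            | zero =>
              induction y using Fin.cases with
              | zero => exact absurd hxy (lt_irrefl _)
              | succ y =>
                simp only [Fin.cases_zero, Fin.cases_succ, Function.comp_apply]
                exact Fin.succ_pos _
            | succ x =>
              induction y using Fin.cases with
              | zero => exact absurd hxy (Fin.not_lt_zero _)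
              | succ y =>
                simp only [Fin.cases_succ, Function.comp_apply]
                exact Fin.succ_lt_succ_iff.mpr (hmono (Fin.succ_lt_succ_iff.mp hxy))
          · intro x y hxy
            induction x using Fin.cases with
            | zero =>
              induction y using Fin.cases with
              | zero => rfl
              | succ y =>
                exfalso
                simp only [Fin.cases_zero, Fin.cases_succ] at hxy
                have h1 := hone y
                rw [← hxy] at h1
                exact one_ne_zero (h1.symm.trans (hC'c (r y)))
            | succ x =>
              induction y using Fin.cases with
              | zero =>
                exfalso
                simp only [Fin.cases_zero, Fin.cases_succ] at hxy
                have h1 := hone x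
                rw [hxy] at h1
                exact one_ne_zero (h1.symm.trans (hC'c (r x)))
              | succ y =>
                simp only [Fin.cases_succ] at hxy
                exact congrArg Fin.succ (hinj hxy)
          · intro k
            induction k using Fin.cases with
            | zero =>
              simp only [Fin.cases_zero]
              rw [hN0, if_pos rfl]
            | succ k =>
              simp only [Fin.cases_succ, Function.comp_apply]
              rw [hCs]
              exact hone k
          · intro i j hij
            induction i using Fin.cases with
            | zero =>
              have hjc : j ≠ c := fun e => hij 0 ⟨by simp, by simp [e]⟩
              rw [hN0, if_neg hjc]
            | succ i =>
              rw [hCs]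
              apply hzero i j
              intro k hk
              exact hij k.succ ⟨by simp [hk.1], by simp [hk.2]⟩
      · intro j hj
        have hjc : j ≠ c := fun e => hac (e ▸ hj 0)
        obtain ⟨hC'j, hU'j⟩ := hzc' j (fun i => hzcM₁ j hj i.succ)
        constructor
        · intro i
          rw [hE]
          induction i using Fin.cases with
          | zero => rw [hN0, if_neg hjc]
          | succ i =>
            rw [hCs]
            exact hC'j i
        · intro k hk
          rw [Matrix.mul_apply]
          rw [Finset.sum_eq_single j
            (fun l _ hl => by
              rw [hU₀]
              simp only [U0mat, Matrix.of_apply]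
              rw [if_neg (fun e => hl e.symm), if_neg hjc, zero_mul])
            (fun h => absurd (Finset.mem_univ _) h)]
          rw [hU₀d j, one_mul]
          exact hU'j k hk

/-- existence of the LCU decomposition: for every `Q` there exist a
unipotent upper triangular `U` and an invertible lower triangular `L` such that
`L * Q * U` is in canonical form. -/

theorem lcu_exists {p m : ℕ} (Q : Matrix (Fin p) (Fin m) ℝ) :
    ∃ (U : Matrix (Fin m) (Fin m) ℝ) (L : Matrix (Fin p) (Fin p) ℝ),
      (∀ i j : Fin m, j < i → U i j = 0) ∧ (∀ i : Fin m, U i i = 1) ∧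
      (∀ i j : Fin p, i < j → L i j = 0) ∧ IsUnit L.det ∧
      IsCanonicalForm (L * Q * U) := by
  obtain ⟨U, L, hUup, hUd, hLlow, hLd, hcan, -⟩ := lcu_aux m p Q
  refine ⟨U, L, hUup, hUd, hLlow, ?_, hcan⟩
  have hbt : L.BlockTriangular OrderDual.toDual :=
    fun i j h => hLlow i j (OrderDual.toDual_lt_toDual.mp h)
  rw [Matrix.det_of_lowerTriangular L hbt]
  exact isUnit_iff_ne_zero.mpr (Finset.prod_ne_zero_iff.mpr (fun i _ => hLd i))
end

section
/- The canonical form in the LCU decomposition is unique: if Q ∈ ℝ^{p×m} and Q⁰₁, Q⁰₂ are both in canonical form with L₁QU₁ = Q⁰₁ and L₂QU₂ = Q⁰₂ for upper triangular unipotent U₁,U₂ ∈ ℝ^{m×m} and invertible lower triangular L₁,L₂ ∈ ℝ^{p×p}, then Q⁰₁ = Q⁰₂. -/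
open Matrix Finset Module Submodule

lemma sum_castLE {p i : ℕ} (hi : i ≤ p) (f : Fin p → ℝ)
    (hf : ∀ k : Fin p, i ≤ (k : ℕ) → f k = 0) :
    ∑ k, f k = ∑ k : Fin i, f (Fin.castLE hi k) := by
  classical
  set g : ℕ → ℝ := fun n => if h : n < p then f ⟨n, h⟩ else 0 with hg
  have h1 : ∑ k : Fin p, f k = ∑ n ∈ Finset.range p, g n := by
    rw [← Fin.sum_univ_eq_sum_range]
    exact Finset.sum_congr rfl fun k _ => by simp [hg, k.isLt]
  have h2 : ∑ k : Fin i, f (Fin.castLE hi k) = ∑ n ∈ Finset.range i, g n := by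
    rw [← Fin.sum_univ_eq_sum_range]
    refine Finset.sum_congr rfl fun k _ => ?_
    have hk : (k : ℕ) < p := lt_of_lt_of_le k.isLt hi
    simp only [hg, dif_pos hk]
    rfl
  rw [h1, h2]
  refine (Finset.sum_subset (Finset.range_subset_range.2 hi) fun n hn hni => ?_).symm
  have hnp : n < p := Finset.mem_range.1 hn
  have hni' : i ≤ n := le_of_not_gt (fun h => hni (Finset.mem_range.2 h))
  simp only [hg, dif_pos hnp]
  exact hf ⟨n, hnp⟩ hni'

lemma blk_mul_left {p m i j : ℕ} (hi : i ≤ p) (hj : j ≤ m)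
    (A : Matrix (Fin p) (Fin p) ℝ) (M : Matrix (Fin p) (Fin m) ℝ)
    (hA : ∀ a b : Fin p, a < b → A a b = 0) :
    (A * M).submatrix (Fin.castLE hi) (Fin.castLE hj) =
      (A.submatrix (Fin.castLE hi) (Fin.castLE hi)) *
        (M.submatrix (Fin.castLE hi) (Fin.castLE hj)) := by
  ext a b
  simp only [Matrix.submatrix_apply, Matrix.mul_apply]
  refine sum_castLE hi _ fun k hk => ?_
  rw [hA _ _ (by simpa [Fin.lt_def] using lt_of_lt_of_le a.isLt hk), zero_mul]

lemma blk_mul_right {p m i j : ℕ} (hi : i ≤ p) (hj : j ≤ m)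
    (M : Matrix (Fin p) (Fin m) ℝ) (B : Matrix (Fin m) (Fin m) ℝ)
    (hB : ∀ a b : Fin m, b < a → B a b = 0) :
    (M * B).submatrix (Fin.castLE hi) (Fin.castLE hj) =
      (M.submatrix (Fin.castLE hi) (Fin.castLE hj)) *
        (B.submatrix (Fin.castLE hj) (Fin.castLE hj)) := by
  ext a b
  simp only [Matrix.submatrix_apply, Matrix.mul_apply]
  refine sum_castLE hj _ fun k hk => ?_
  rw [hB _ _ (by simpa [Fin.lt_def] using lt_of_lt_of_le b.isLt hk), mul_zero]

lemma det_blk_lower {p i : ℕ} (hi : i ≤ p) (L : Matrix (Fin p) (Fin p) ℝ)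
    (hL : ∀ a b : Fin p, a < b → L a b = 0) (h : IsUnit L.det) :
    IsUnit (L.submatrix (Fin.castLE hi) (Fin.castLE hi)).det := by
  have hdet : L.det = ∏ k, L k k :=
    Matrix.det_of_lowerTriangular L (fun a b hab => hL a b hab)
  have hdet2 : (L.submatrix (Fin.castLE hi) (Fin.castLE hi)).det
      = ∏ k : Fin i, L (Fin.castLE hi k) (Fin.castLE hi k) :=
    Matrix.det_of_lowerTriangular _ (fun a b hab => by
      exact hL _ _ (show (a : ℕ) < (b : ℕ) from hab))
  rw [isUnit_iff_ne_zero, hdet2]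
  rw [isUnit_iff_ne_zero, hdet] at h
  have := Finset.prod_ne_zero_iff.1 h
  exact Finset.prod_ne_zero_iff.2 fun k _ => this _ (Finset.mem_univ _)

lemma det_blk_upper_uni {m j : ℕ} (hj : j ≤ m) (U : Matrix (Fin m) (Fin m) ℝ)
    (hU : ∀ a b : Fin m, b < a → U a b = 0) (hUd : ∀ a, U a a = 1) :
    IsUnit (U.submatrix (Fin.castLE hj) (Fin.castLE hj)).det := by
  have hdet : (U.submatrix (Fin.castLE hj) (Fin.castLE hj)).det
      = ∏ k : Fin j, U (Fin.castLE hj k) (Fin.castLE hj k) :=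
    Matrix.det_of_upperTriangular (fun a b hab => by
      exact hU _ _ (show (b : ℕ) < (a : ℕ) from hab))
  rw [hdet]
  simp [hUd]

/-- rank of the leading `i × j` block. -/
noncomputable def blkRank {p m : ℕ} (Q : Matrix (Fin p) (Fin m) ℝ) (i j : ℕ) : ℕ :=
  if h : i ≤ p ∧ j ≤ m then (Q.submatrix (Fin.castLE h.1) (Fin.castLE h.2)).rank else 0

lemma blkRank_inv {p m : ℕ} (Q : Matrix (Fin p) (Fin m) ℝ)
    (L : Matrix (Fin p) (Fin p) ℝ) (U : Matrix (Fin m) (Fin m) ℝ)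
    (hL : ∀ a b : Fin p, a < b → L a b = 0) (hLd : IsUnit L.det)
    (hU : ∀ a b : Fin m, b < a → U a b = 0) (hUd : ∀ a, U a a = 1)
    (i j : ℕ) : blkRank (L * Q * U) i j = blkRank Q i j := by
  unfold blkRank
  split
  · next h =>
    obtain ⟨hi, hj⟩ := h
    rw [blk_mul_right hi hj (L * Q) U hU, blk_mul_left hi hj L Q hL,
      Matrix.rank_mul_eq_left_of_isUnit_det _ _ (det_blk_upper_uni hj U hU hUd),
      Matrix.rank_mul_eq_right_of_isUnit_det _ _ (det_blk_lower hi L hL hLd)]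
  · rfl

lemma rank_blk_canonical {p m ρ : ℕ} {Q : Matrix (Fin p) (Fin m) ℝ}
    (r : Fin ρ → Fin p) (c : Fin ρ → Fin m) (hr : StrictMono r) (hc : Function.Injective c)
    (h1 : ∀ k, Q (r k) (c k) = 1)
    (h0 : ∀ i j, (∀ k, ¬(i = r k ∧ j = c k)) → Q i j = 0)
    {i j : ℕ} (hi : i ≤ p) (hj : j ≤ m) :
    (Q.submatrix (Fin.castLE hi) (Fin.castLE hj)).rank =
      (Finset.univ.filter fun k : Fin ρ => (r k : ℕ) < i ∧ (c k : ℕ) < j).card := by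
  classical
  set B := Q.submatrix (Fin.castLE hi) (Fin.castLE hj) with hB
  set S := (Finset.univ.filter fun k : Fin ρ => (r k : ℕ) < i ∧ (c k : ℕ) < j) with hS
  have memS : ∀ k : Fin ρ, k ∈ S ↔ (r k : ℕ) < i ∧ (c k : ℕ) < j := by
    intro k; simp [hS]
  set v : S → (Fin i → ℝ) := fun k => Pi.single ⟨(r k.1 : ℕ), ((memS k.1).1 k.2).1⟩ 1 with hv
  -- a helper: the column of B at a pivot column
  have col_pivot : ∀ (k : Fin ρ) (hck : (c k : ℕ) < j) (hrk : (r k : ℕ) < i)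
      (a : Fin i), Q (Fin.castLE hi a) (c k) =
        (Pi.single (⟨(r k : ℕ), hrk⟩ : Fin i) (1:ℝ) : Fin i → ℝ) a := by
    intro k hck hrk a
    rw [Pi.single_apply]
    by_cases ha : a = (⟨(r k : ℕ), hrk⟩ : Fin i)
    · rw [if_pos ha]
      have : Fin.castLE hi a = r k := by
        apply Fin.ext; simp [ha]
      rw [this]; exact h1 k
    · rw [if_neg ha]
      apply h0
      intro k' ⟨e1, e2⟩
      have hkk : k' = k := hc e2.symm
      subst hkk
      apply ha
      apply Fin.ext
      have : ((Fin.castLE hi a : Fin p) : ℕ) = (r k' : ℕ) := by rw [e1]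
      simpa using this
  have span_eq : Submodule.span ℝ (Set.range Bᵀ) = Submodule.span ℝ (Set.range v) := by
    apply le_antisymm
    · rw [Submodule.span_le]
      rintro x ⟨b, rfl⟩
      by_cases h : ∃ k : Fin ρ, c k = Fin.castLE hj b ∧ (r k : ℕ) < i
      · obtain ⟨k, hk1, hk2⟩ := h
        have hck : (c k : ℕ) < j := by
          have : ((c k : Fin m) : ℕ) = (b : ℕ) := by rw [hk1]; simp
          omega
        have hkS : k ∈ S := (memS k).2 ⟨hk2, hck⟩
        have : Bᵀ b = v ⟨k, hkS⟩ := by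
          funext a
          have := col_pivot k hck hk2 a
          simp only [hB, Matrix.transpose_apply, Matrix.submatrix_apply, hv]
          rw [← hk1] at *
          exact this
        rw [this]
        exact Submodule.subset_span ⟨⟨k, hkS⟩, rfl⟩
      · have : Bᵀ b = 0 := by
          funext a
          simp only [hB, Matrix.transpose_apply, Matrix.submatrix_apply]
          apply h0
          intro k ⟨e1, e2⟩
          apply h
          refine ⟨k, e2.symm, ?_⟩
          have : ((Fin.castLE hi a : Fin p) : ℕ) = (r k : ℕ) := by rw [e1]
          have ha := a.isLt
          simp only [Fin.coe_castLE] at this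
          omega
        rw [this]
        exact Submodule.zero_mem _
    · rw [Submodule.span_le]
      rintro x ⟨k, rfl⟩
      have hck : (c k.1 : ℕ) < j := ((memS k.1).1 k.2).2
      have hrk : (r k.1 : ℕ) < i := ((memS k.1).1 k.2).1
      have : v k = Bᵀ ⟨(c k.1 : ℕ), hck⟩ := by
        funext a
        have := col_pivot k.1 hck hrk a
        simp only [hB, Matrix.transpose_apply, Matrix.submatrix_apply, hv]
        have hcast : Fin.castLE hj (⟨(c k.1 : ℕ), hck⟩ : Fin j) = c k.1 := by
          apply Fin.ext; simp
        rw [hcast]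
        exact this.symm
      rw [this]
      exact Submodule.subset_span ⟨_, rfl⟩
  have hvli : LinearIndependent ℝ v := by
    have hbase : LinearIndependent ℝ (fun a : Fin i => (Pi.single a 1 : Fin i → ℝ)) := by
      have heq : (fun a : Fin i => (Pi.single a 1 : Fin i → ℝ)) = ⇑(Pi.basisFun ℝ (Fin i)) := by
        funext a; simp
      rw [heq]
      exact (Pi.basisFun ℝ (Fin i)).linearIndependent
    have : v = (fun a : Fin i => (Pi.single a 1 : Fin i → ℝ)) ∘
        (fun k : S => (⟨(r k.1 : ℕ), ((memS k.1).1 k.2).1⟩ : Fin i)) := rfl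
    rw [this]
    apply hbase.comp
    intro k l hkl
    have : (r k.1 : ℕ) = (r l.1 : ℕ) := by
      simpa [Fin.mk.injEq] using hkl
    exact Subtype.ext (hr.injective (Fin.ext this))
  rw [Matrix.rank_eq_finrank_span_cols, show Set.range B.col = Set.range Bᵀ from rfl, span_eq, finrank_span_eq_card hvli,
    Fintype.card_coe]

lemma blkRank_canonical {p m ρ : ℕ} {Q : Matrix (Fin p) (Fin m) ℝ}
    (r : Fin ρ → Fin p) (c : Fin ρ → Fin m) (hr : StrictMono r) (hc : Function.Injective c)
    (h1 : ∀ k, Q (r k) (c k) = 1)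
    (h0 : ∀ i j, (∀ k, ¬(i = r k ∧ j = c k)) → Q i j = 0)
    {i j : ℕ} (hi : i ≤ p) (hj : j ≤ m) :
    blkRank Q i j =
      (Finset.univ.filter fun k : Fin ρ => (r k : ℕ) < i ∧ (c k : ℕ) < j).card := by
  unfold blkRank
  rw [dif_pos ⟨hi, hj⟩]
  exact rank_blk_canonical r c hr hc h1 h0 hi hj

lemma entry_eq {p m : ℕ} (Q : Matrix (Fin p) (Fin m) ℝ) (hcan : IsCanonicalForm Q)
    (a : Fin p) (b : Fin m) :
    Q a b = (((blkRank Q (a + 1) (b + 1) + blkRank Q a b)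
      - (blkRank Q a (b + 1) + blkRank Q (a + 1) b) : ℕ) : ℝ) := by
  classical
  rcases hcan with rfl | ⟨ρ, _, r, c, hr, hc, h1, h0⟩
  · have hz : ∀ i j : ℕ, blkRank (0 : Matrix (Fin p) (Fin m) ℝ) i j = 0 := by
      intro i j
      unfold blkRank
      split
      · simp
      · rfl
    simp [hz]
  · have hi1 : (a : ℕ) + 1 ≤ p := a.isLt
    have hj1 : (b : ℕ) + 1 ≤ m := b.isLt
    have hi0 : (a : ℕ) ≤ p := le_of_lt a.isLt
    have hj0 : (b : ℕ) ≤ m := le_of_lt b.isLt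
    set P := (Finset.univ.filter fun k : Fin ρ => (r k : ℕ) = (a : ℕ) ∧ (c k : ℕ) = (b : ℕ))
      with hP
    have cardfun : ∀ (i j : ℕ), i ≤ p → j ≤ m → blkRank Q i j =
        (Finset.univ.filter fun k : Fin ρ => (r k : ℕ) < i ∧ (c k : ℕ) < j).card :=
      fun i j hi hj => blkRank_canonical r c hr hc h1 h0 hi hj
    -- split cards
    have split1 : ∀ j : ℕ,
        (Finset.univ.filter fun k : Fin ρ => (r k : ℕ) < (a:ℕ)+1 ∧ (c k : ℕ) < j).card =
        (Finset.univ.filter fun k : Fin ρ => (r k : ℕ) < (a:ℕ) ∧ (c k : ℕ) < j).card +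
        (Finset.univ.filter fun k : Fin ρ => (r k : ℕ) = (a:ℕ) ∧ (c k : ℕ) < j).card := by
      intro j
      rw [← Finset.card_union_of_disjoint (by
        simp only [Finset.disjoint_left, Finset.mem_filter]
        rintro k ⟨_, hk1, _⟩ ⟨_, hk2, _⟩
        omega), ← Finset.filter_or]
      congr 1
      apply Finset.filter_congr
      intro k _
      constructor
      · rintro ⟨h1', h2'⟩
        rcases Nat.lt_succ_iff_lt_or_eq.1 h1' with h | h
        · exact Or.inl ⟨h, h2'⟩
        · exact Or.inr ⟨h, h2'⟩
      · rintro (⟨h1', h2'⟩ | ⟨h1', h2'⟩) <;> constructor <;> omega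
    have split2 :
        (Finset.univ.filter fun k : Fin ρ => (r k : ℕ) = (a:ℕ) ∧ (c k : ℕ) < (b:ℕ)+1).card =
        (Finset.univ.filter fun k : Fin ρ => (r k : ℕ) = (a:ℕ) ∧ (c k : ℕ) < (b:ℕ)).card +
        P.card := by
      rw [hP, ← Finset.card_union_of_disjoint (by
        simp only [Finset.disjoint_left, Finset.mem_filter]
        rintro k ⟨_, _, hk1⟩ ⟨_, _, hk2⟩
        omega), ← Finset.filter_or]
      congr 1
      apply Finset.filter_congr
      intro k _
      constructor
      · rintro ⟨h1', h2'⟩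
        rcases Nat.lt_succ_iff_lt_or_eq.1 h2' with h | h
        · exact Or.inl ⟨h1', h⟩
        · exact Or.inr ⟨h1', h⟩
      · rintro (⟨h1', h2'⟩ | ⟨h1', h2'⟩) <;> constructor <;> omega
    have key : (blkRank Q ((a:ℕ) + 1) ((b:ℕ) + 1) + blkRank Q a b)
        - (blkRank Q a ((b:ℕ)+1) + blkRank Q ((a:ℕ)+1) (b:ℕ)) = P.card := by
      rw [cardfun _ _ hi1 hj1, cardfun _ _ hi0 hj0, cardfun _ _ hi0 hj1,
        cardfun _ _ hi1 hj0, split1 ((b:ℕ)+1), split1 (b:ℕ), split2]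
      omega
    rw [key]
    by_cases hex : ∃ k, r k = a ∧ c k = b
    · obtain ⟨k, hk1, hk2⟩ := hex
      have : P = {k} := by
        ext k'
        simp only [hP, Finset.mem_filter, Finset.mem_univ, true_and, Finset.mem_singleton]
        constructor
        · rintro ⟨e1, e2⟩
          apply hr.injective
          apply Fin.ext
          rw [e1, hk1]
        · rintro rfl
          exact ⟨by rw [hk1], by rw [hk2]⟩
      rw [this, Finset.card_singleton, ← hk1, ← hk2, h1 k]
      norm_num
    · have : P = ∅ := by
        ext k'
        simp only [hP, Finset.mem_filter, Finset.mem_univ, true_and,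
          Finset.notMem_empty, iff_false]
        rintro ⟨e1, e2⟩
        exact hex ⟨k', Fin.ext e1, Fin.ext e2⟩
      rw [this, Finset.card_empty]
      rw [h0 a b (fun k ⟨e1, e2⟩ => hex ⟨k, e1.symm, e2.symm⟩)]
      norm_num

/-- uniqueness of the canonical form in the LCU decomposition. -/
theorem lcu_unique {p m : ℕ} (Q Q1 Q2 : Matrix (Fin p) (Fin m) ℝ)
    (U1 U2 : Matrix (Fin m) (Fin m) ℝ) (L1 L2 : Matrix (Fin p) (Fin p) ℝ)
    (hU1 : ∀ i j : Fin m, j < i → U1 i j = 0) (hU1d : ∀ i : Fin m, U1 i i = 1)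
    (hU2 : ∀ i j : Fin m, j < i → U2 i j = 0) (hU2d : ∀ i : Fin m, U2 i i = 1)
    (hL1 : ∀ i j : Fin p, i < j → L1 i j = 0) (hL1inv : IsUnit L1.det)
    (hL2 : ∀ i j : Fin p, i < j → L2 i j = 0) (hL2inv : IsUnit L2.det)
    (h1 : L1 * Q * U1 = Q1) (hc1 : IsCanonicalForm Q1)
    (h2 : L2 * Q * U2 = Q2) (hc2 : IsCanonicalForm Q2) :
    Q1 = Q2 := by
  have hrk : ∀ i j : ℕ, blkRank Q1 i j = blkRank Q2 i j := by
    intro i j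
    rw [← h1, ← h2, blkRank_inv Q L1 U1 hL1 hL1inv hU1 hU1d,
      blkRank_inv Q L2 U2 hL2 hL2inv hU2 hU2d]
  ext a b
  rw [entry_eq Q1 hc1 a b, entry_eq Q2 hc2 a b, hrk, hrk, hrk, hrk]
end

section
/- Let a, b ∈ ℝ with ab ∉ { −(π/2 + kπ)² : k ∈ ℕ }. Then for every f ∈ L²(0,1;ℝ) there exists a unique u ∈ L²(0,1;ℝ) solving the integral equation u(t) + ab ∫ₜ¹ ∫₀ˢ u(σ) dσ ds = f(t) for a.e. t ∈ (0,1). -/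
open MeasureTheory
open Set intervalIntegral

section Helpers


/-- Integration by parts / Fubini over the triangle. -/
lemma parts_aux (φ φ' h : ℝ → ℝ) (hφ : ∀ x, HasDerivAt φ (φ' x) x)
    (hφ'c : Continuous φ') (hh : Integrable h) {s : ℝ} (hs : 0 ≤ s) :
    ∫ σ in (0:ℝ)..s, φ' σ * ∫ τ in (0:ℝ)..σ, h τ
      = ∫ τ in (0:ℝ)..s, (φ s - φ τ) * h τ := by
  set μ : Measure ℝ := volume.restrict (Ioc 0 s) with hμ
  set F : ℝ → ℝ → ℝ := fun σ τ => ({p : ℝ × ℝ | p.2 ≤ p.1}.indicator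
      (fun p => φ' p.1 * h p.2)) (σ, τ) with hF
  have hTmeas : MeasurableSet {p : ℝ × ℝ | p.2 ≤ p.1} :=
    measurableSet_le measurable_snd measurable_fst
  have hbase : Integrable (fun p : ℝ × ℝ => φ' p.1 * h p.2) (μ.prod μ) :=
    Integrable.mul_prod (hφ'c.integrableOn_Ioc) (hh.restrict)
  have hFint : Integrable (Function.uncurry F) (μ.prod μ) := by
    have := hbase.indicator hTmeas
    exact this
  have swap := MeasureTheory.integral_integral_swap hFint
  have hL : ∫ σ in (0:ℝ)..s, φ' σ * ∫ τ in (0:ℝ)..σ, h τ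
      = ∫ σ, (∫ τ, F σ τ ∂μ) ∂μ := by
    rw [intervalIntegral.integral_of_le hs]
    refine setIntegral_congr_fun measurableSet_Ioc (fun σ hσ => ?_)
    have h1 : (fun τ => F σ τ) = (Iic σ).indicator (fun τ => φ' σ * h τ) := by
      funext τ
      by_cases hτ : τ ≤ σ <;>
        simp [hF, Set.indicator, hτ]
    rw [h1, MeasureTheory.integral_indicator measurableSet_Iic, hμ,
      Measure.restrict_restrict measurableSet_Iic]
    have h2 : Iic σ ∩ Ioc 0 s = Ioc 0 σ := by
      ext x
      simp only [mem_inter_iff, mem_Iic, mem_Ioc]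
      exact ⟨fun ⟨hx1, hx2, _⟩ => ⟨hx2, hx1⟩,
        fun ⟨hx1, hx2⟩ => ⟨hx2, hx1, hx2.trans hσ.2⟩⟩
    rw [h2, intervalIntegral.integral_of_le (le_of_lt hσ.1)]
    exact (MeasureTheory.integral_const_mul _ _).symm
  have hR : ∫ τ in (0:ℝ)..s, (φ s - φ τ) * h τ
      = ∫ τ, (∫ σ, F σ τ ∂μ) ∂μ := by
    rw [intervalIntegral.integral_of_le hs]
    refine setIntegral_congr_fun measurableSet_Ioc (fun τ hτ => ?_)
    have h1 : (fun σ => F σ τ) = (Ici τ).indicator (fun σ => φ' σ * h τ) := by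
      funext σ
      by_cases hστ : τ ≤ σ <;> simp [hF, Set.indicator, hστ]
    rw [h1, MeasureTheory.integral_indicator measurableSet_Ici, hμ,
      Measure.restrict_restrict measurableSet_Ici]
    have h2 : Ici τ ∩ Ioc 0 s = Icc τ s := by
      ext x
      simp only [mem_inter_iff, mem_Ici, mem_Icc, mem_Ioc]
      exact ⟨fun ⟨hx1, _, hx2⟩ => ⟨hx1, hx2⟩,
        fun ⟨hx1, hx2⟩ => ⟨hx1, hτ.1.trans_le hx1, hx2⟩⟩
    rw [h2, integral_Icc_eq_integral_Ioc,
      ← intervalIntegral.integral_of_le hτ.2, intervalIntegral.integral_mul_const,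
      intervalIntegral.integral_eq_sub_of_hasDerivAt (fun x _ => hφ x)
        (hφ'c.intervalIntegrable _ _)]
  rw [hL, hR]
  exact swap

/-- Multiplying an integrable function supported on `(0,1)` by a continuous function
preserves integrability. -/
lemma mul_g_integrable (φ h : ℝ → ℝ) (hφ : Continuous φ) (hh : Integrable h)
    (hsupp : ∀ x, x ∉ Set.Ioo (0:ℝ) 1 → h x = 0) :
    Integrable (fun x => φ x * h x) := by
  obtain ⟨C, hC⟩ := (isCompact_Icc (a := (0:ℝ)) (b := 1)).exists_bound_of_continuousOn
    hφ.continuousOn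
  have heq : (fun x => φ x * h x) = fun x => (Set.Icc (0:ℝ) 1).indicator φ x * h x := by
    funext x
    by_cases hx : x ∈ Set.Ioo (0:ℝ) 1
    · rw [Set.indicator_of_mem (Ioo_subset_Icc_self hx)]
    · rw [hsupp x hx, mul_zero, mul_zero]
  rw [heq]
  refine hh.bdd_mul ((hφ.stronglyMeasurable.indicator measurableSet_Icc).aestronglyMeasurable)
    (c := max C 0) (ae_of_all _ fun x => ?_)
  by_cases hx : x ∈ Set.Icc (0:ℝ) 1
  · rw [Set.indicator_of_mem hx]
    exact le_max_of_le_left (hC x hx)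
  · rw [Set.indicator_of_notMem hx]
    simp


end Helpers

theorem key_solvable (c : ℝ) (α β : ℝ → ℝ)
    (hα : ∀ t, HasDerivAt α (c * β t) t)
    (hβ : ∀ t, HasDerivAt β (α t) t)
    (hα0 : α 0 = 1) (hβ0 : β 0 = 0) (hα1 : α 1 ≠ 0)
    (f : ℝ → ℝ) (hf : MemLp f 2 (volume.restrict (Set.Ioo (0:ℝ) 1))) :
    ∃ u : ℝ → ℝ, MemLp u 2 (volume.restrict (Set.Ioo (0:ℝ) 1)) ∧
      (∀ᵐ t ∂(volume.restrict (Set.Ioo (0:ℝ) 1)),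
        u t + c * ∫ s in t..(1:ℝ), ∫ σ in (0:ℝ)..s, u σ = f t) ∧
      ∀ v : ℝ → ℝ, MemLp v 2 (volume.restrict (Set.Ioo (0:ℝ) 1)) →
        (∀ᵐ t ∂(volume.restrict (Set.Ioo (0:ℝ) 1)),
          v t + c * ∫ s in t..(1:ℝ), ∫ σ in (0:ℝ)..s, v σ = f t) →
        v =ᵐ[volume.restrict (Set.Ioo (0:ℝ) 1)] u := by
  classical
  have αd : Differentiable ℝ α := fun t => (hα t).differentiableAt
  have βd : Differentiable ℝ β := fun t => (hβ t).differentiableAt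
  have αc : Continuous α := αd.continuous
  have βc : Continuous β := βd.continuous
  -- Wronskian-type invariant
  have wr : ∀ t : ℝ, α t ^ 2 - c * β t ^ 2 = 1 := by
    have hd : Differentiable ℝ (fun t => α t ^ 2 - c * β t ^ 2) :=
      (αd.pow 2).sub ((βd.pow 2).const_mul c)
    have hz : ∀ x, deriv (fun t => α t ^ 2 - c * β t ^ 2) x = 0 := by
      intro x
      have h1 : HasDerivAt (fun t => α t ^ 2 - c * β t ^ 2)
          ((2:ℕ) * α x ^ (2-1) * (c * β x) - c * ((2:ℕ) * β x ^ (2-1) * α x)) x :=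
        ((hα x).pow 2).sub (((hβ x).pow 2).const_mul c)
      rw [h1.deriv]
      push_cast
      ring
    have hconst : ∀ t : ℝ, (fun t => α t ^ 2 - c * β t ^ 2) t
        = (fun t => α t ^ 2 - c * β t ^ 2) 0 :=
      fun t => is_const_of_deriv_eq_zero hd hz t 0
    intro t
    have ht := hconst t
    simp only [hα0, hβ0] at ht
    rw [ht]; ring
  haveI hfin : IsFiniteMeasure (volume.restrict (Set.Ioo (0:ℝ) 1)) := by
    constructor
    rw [Measure.restrict_apply_univ, Real.volume_Ioo]
    norm_num
  have hfi : Integrable f (volume.restrict (Set.Ioo (0:ℝ) 1)) := hf.integrable one_le_two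
  set g : ℝ → ℝ := (Set.Ioo (0:ℝ) 1).indicator f with hg
  have hgsupp : ∀ x, x ∉ Set.Ioo (0:ℝ) 1 → g x = 0 :=
    fun x hx => Set.indicator_of_notMem hx f
  have hgi : Integrable g volume := (integrable_indicator_iff measurableSet_Ioo).2 hfi
  have hag : Integrable (fun τ => α τ * g τ) volume := mul_g_integrable α g αc hgi hgsupp
  have hbg : Integrable (fun τ => β τ * g τ) volume := mul_g_integrable β g βc hgi hgsupp
  have haag : Integrable (fun τ => α τ * (α τ * g τ)) volume :=
    mul_g_integrable α _ αc hag (fun x hx => by rw [hgsupp x hx, mul_zero])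
  have hbbg : Integrable (fun τ => β τ * (β τ * g τ)) volume :=
    mul_g_integrable β _ βc hbg (fun x hx => by rw [hgsupp x hx, mul_zero])
  have habg : Integrable (fun τ => α τ * (β τ * g τ)) volume :=
    mul_g_integrable α _ αc hbg (fun x hx => by rw [hgsupp x hx, mul_zero])
  have hbag : Integrable (fun τ => β τ * (α τ * g τ)) volume :=
    mul_g_integrable β _ βc hag (fun x hx => by rw [hgsupp x hx, mul_zero])
  have Acont : Continuous (fun t => ∫ τ in (0:ℝ)..t, α τ * g τ) := hag.continuous_primitive 0
  have Bcont : Continuous (fun t => ∫ τ in (0:ℝ)..t, β τ * g τ) := hbg.continuous_primitive 0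
  set lam : ℝ := -(α 1 * (∫ τ in (0:ℝ)..1, β τ * g τ)
      - β 1 * (∫ τ in (0:ℝ)..1, α τ * g τ)) / α 1 with hlamdef
  have hlam1 : lam * α 1 = -(α 1 * (∫ τ in (0:ℝ)..1, β τ * g τ)
      - β 1 * (∫ τ in (0:ℝ)..1, α τ * g τ)) := by
    rw [hlamdef]; field_simp
  set W : ℝ → ℝ := fun t => lam * α t + (α t * (∫ τ in (0:ℝ)..t, β τ * g τ)
      - β t * (∫ τ in (0:ℝ)..t, α τ * g τ)) with hWdef
  have Wcont : Continuous W := by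
    rw [hWdef]
    exact (continuous_const.mul αc).add ((αc.mul Bcont).sub (βc.mul Acont))
  have hW1 : W 1 = 0 := by
    have : W 1 = lam * α 1 + (α 1 * (∫ τ in (0:ℝ)..1, β τ * g τ)
      - β 1 * (∫ τ in (0:ℝ)..1, α τ * g τ)) := rfl
    rw [this, hlam1]; ring
  set u : ℝ → ℝ := fun t => g t - c * W t with hudef
  have hu_ii : ∀ a b : ℝ, IntervalIntegrable u volume a b := fun a b =>
    (hgi.intervalIntegrable).sub ((continuous_const.mul Wcont).intervalIntegrable a b)
  -- FTC for the homogeneous solutions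
  have ftcβ : ∀ p q : ℝ, ∫ σ in p..q, α σ = β q - β p := fun p q =>
    intervalIntegral.integral_eq_sub_of_hasDerivAt (fun x _ => hβ x)
      (αc.intervalIntegrable _ _)
  have ftcα : ∀ p q : ℝ, ∫ σ in p..q, c * β σ = α q - α p := fun p q =>
    intervalIntegral.integral_eq_sub_of_hasDerivAt (fun x _ => hα x)
      ((continuous_const.mul βc).intervalIntegrable _ _)
  -- integration by parts instances
  have e1 : ∀ s : ℝ, 0 ≤ s → ∫ σ in (0:ℝ)..s, α σ * (∫ τ in (0:ℝ)..σ, β τ * g τ)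
      = β s * (∫ τ in (0:ℝ)..s, β τ * g τ) - ∫ τ in (0:ℝ)..s, β τ * (β τ * g τ) := by
    intro s hs
    have hp : ∫ σ in (0:ℝ)..s, α σ * (∫ τ in (0:ℝ)..σ, β τ * g τ)
        = ∫ τ in (0:ℝ)..s, (β s - β τ) * (β τ * g τ) :=
      parts_aux β α (fun τ => β τ * g τ) hβ αc hbg hs
    rw [hp]
    have h2 : ∫ τ in (0:ℝ)..s, (β s - β τ) * (β τ * g τ)
        = ∫ τ in (0:ℝ)..s, (β s * (β τ * g τ) - β τ * (β τ * g τ)) :=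
      intervalIntegral.integral_congr (fun τ _ => by ring)
    rw [h2, intervalIntegral.integral_sub ((hbg.intervalIntegrable).const_mul _)
      (hbbg.intervalIntegrable), intervalIntegral.integral_const_mul]
  have e2 : ∀ s : ℝ, 0 ≤ s → ∫ σ in (0:ℝ)..s, (c * β σ) * (∫ τ in (0:ℝ)..σ, α τ * g τ)
      = α s * (∫ τ in (0:ℝ)..s, α τ * g τ) - ∫ τ in (0:ℝ)..s, α τ * (α τ * g τ) := by
    intro s hs
    have hp : ∫ σ in (0:ℝ)..s, (c * β σ) * (∫ τ in (0:ℝ)..σ, α τ * g τ)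
        = ∫ τ in (0:ℝ)..s, (α s - α τ) * (α τ * g τ) :=
      parts_aux α (fun t => c * β t) (fun τ => α τ * g τ) hα (continuous_const.mul βc) hag hs
    rw [hp]
    have h2 : ∫ τ in (0:ℝ)..s, (α s - α τ) * (α τ * g τ)
        = ∫ τ in (0:ℝ)..s, (α s * (α τ * g τ) - α τ * (α τ * g τ)) :=
      intervalIntegral.integral_congr (fun τ _ => by ring)
    rw [h2, intervalIntegral.integral_sub ((hag.intervalIntegrable).const_mul _)
      (haag.intervalIntegrable), intervalIntegral.integral_const_mul]
  have e3 : ∀ s : ℝ, 0 ≤ s → ∫ σ in (0:ℝ)..s, α σ * (∫ τ in (0:ℝ)..σ, α τ * g τ)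
      = β s * (∫ τ in (0:ℝ)..s, α τ * g τ) - ∫ τ in (0:ℝ)..s, β τ * (α τ * g τ) := by
    intro s hs
    have hp : ∫ σ in (0:ℝ)..s, α σ * (∫ τ in (0:ℝ)..σ, α τ * g τ)
        = ∫ τ in (0:ℝ)..s, (β s - β τ) * (α τ * g τ) :=
      parts_aux β α (fun τ => α τ * g τ) hβ αc hag hs
    rw [hp]
    have h2 : ∫ τ in (0:ℝ)..s, (β s - β τ) * (α τ * g τ)
        = ∫ τ in (0:ℝ)..s, (β s * (α τ * g τ) - β τ * (α τ * g τ)) :=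
      intervalIntegral.integral_congr (fun τ _ => by ring)
    rw [h2, intervalIntegral.integral_sub ((hag.intervalIntegrable).const_mul _)
      (hbag.intervalIntegrable), intervalIntegral.integral_const_mul]
  have e4 : ∀ s : ℝ, 0 ≤ s → ∫ σ in (0:ℝ)..s, (c * β σ) * (∫ τ in (0:ℝ)..σ, β τ * g τ)
      = α s * (∫ τ in (0:ℝ)..s, β τ * g τ) - ∫ τ in (0:ℝ)..s, α τ * (β τ * g τ) := by
    intro s hs
    have hp : ∫ σ in (0:ℝ)..s, (c * β σ) * (∫ τ in (0:ℝ)..σ, β τ * g τ)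
        = ∫ τ in (0:ℝ)..s, (α s - α τ) * (β τ * g τ) :=
      parts_aux α (fun t => c * β t) (fun τ => β τ * g τ) hα (continuous_const.mul βc) hbg hs
    rw [hp]
    have h2 : ∫ τ in (0:ℝ)..s, (α s - α τ) * (β τ * g τ)
        = ∫ τ in (0:ℝ)..s, (α s * (β τ * g τ) - α τ * (β τ * g τ)) :=
      intervalIntegral.integral_congr (fun τ _ => by ring)
    rw [h2, intervalIntegral.integral_sub ((hbg.intervalIntegrable).const_mul _)
      (habg.intervalIntegrable), intervalIntegral.integral_const_mul]
  -- pointwise Wronskian combination inside integrals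
  have e5 : ∀ s : ℝ, (∫ τ in (0:ℝ)..s, α τ * (α τ * g τ))
      - c * ∫ τ in (0:ℝ)..s, β τ * (β τ * g τ) = ∫ τ in (0:ℝ)..s, g τ := by
    intro s
    rw [← intervalIntegral.integral_const_mul,
      ← intervalIntegral.integral_sub (haag.intervalIntegrable)
        ((hbbg.intervalIntegrable).const_mul c)]
    refine intervalIntegral.integral_congr (fun τ _ => ?_)
    linear_combination g τ * wr τ
  -- Claim 1: inner integral of u
  have claim1 : ∀ s : ℝ, 0 ≤ s →
      (∫ σ in (0:ℝ)..s, u σ) = α s * (∫ τ in (0:ℝ)..s, α τ * g τ)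
        - c * β s * (lam + ∫ τ in (0:ℝ)..s, β τ * g τ) := by
    intro s hs
    have l1 : ∫ σ in (0:ℝ)..s, u σ
        = (∫ σ in (0:ℝ)..s, g σ) - c * ∫ σ in (0:ℝ)..s, W σ := by
      have : ∫ σ in (0:ℝ)..s, u σ = ∫ σ in (0:ℝ)..s, (g σ - c * W σ) := by
        simp only [hudef]
      rw [this, intervalIntegral.integral_sub (hgi.intervalIntegrable)
        ((continuous_const.fun_mul Wcont).intervalIntegrable _ _),
        intervalIntegral.integral_const_mul]
    have w1 : ∫ σ in (0:ℝ)..s, W σ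
        = (∫ σ in (0:ℝ)..s, lam * α σ)
          + ((∫ σ in (0:ℝ)..s, α σ * (∫ τ in (0:ℝ)..σ, β τ * g τ))
            - ∫ σ in (0:ℝ)..s, β σ * (∫ τ in (0:ℝ)..σ, α τ * g τ)) := by
      have : ∫ σ in (0:ℝ)..s, W σ
          = ∫ σ in (0:ℝ)..s, (lam * α σ + (α σ * (∫ τ in (0:ℝ)..σ, β τ * g τ)
            - β σ * (∫ τ in (0:ℝ)..σ, α τ * g τ))) := by
        simp only [hWdef]
      rw [this, intervalIntegral.integral_add
        ((continuous_const.fun_mul αc).intervalIntegrable _ _)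
        (((αc.fun_mul Bcont).fun_sub (βc.fun_mul Acont)).intervalIntegrable _ _),
        intervalIntegral.integral_sub ((αc.fun_mul Bcont).intervalIntegrable _ _)
        ((βc.fun_mul Acont).intervalIntegrable _ _)]
    have w2 : ∫ σ in (0:ℝ)..s, (c * β σ) * (∫ τ in (0:ℝ)..σ, α τ * g τ)
        = c * ∫ σ in (0:ℝ)..s, β σ * (∫ τ in (0:ℝ)..σ, α τ * g τ) := by
      rw [← intervalIntegral.integral_const_mul]
      exact intervalIntegral.integral_congr (fun σ _ => by ring)
    have w3 : ∫ σ in (0:ℝ)..s, lam * α σ = lam * β s := by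
      rw [intervalIntegral.integral_const_mul, ftcβ 0 s, hβ0, sub_zero]
    rw [l1, w1, w3]
    have he1 := e1 s hs
    have he2 := e2 s hs
    have he5 := e5 s
    linear_combination (-1 : ℝ) * c * he1 - w2 + he2 - he5
  -- Claim 2 (primitive of V from 0)
  have Acont' := Acont
  have claim2E : ∀ r : ℝ, 0 ≤ r →
      (∫ s in (0:ℝ)..r, (α s * (∫ τ in (0:ℝ)..s, α τ * g τ)
        - c * β s * (lam + ∫ τ in (0:ℝ)..s, β τ * g τ)))
      = β r * (∫ τ in (0:ℝ)..r, α τ * g τ)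
        - α r * (∫ τ in (0:ℝ)..r, β τ * g τ) - lam * α r + lam := by
    intro r hr
    have sp : ∫ s in (0:ℝ)..r, (α s * (∫ τ in (0:ℝ)..s, α τ * g τ)
          - c * β s * (lam + ∫ τ in (0:ℝ)..s, β τ * g τ))
        = (∫ s in (0:ℝ)..r, α s * (∫ τ in (0:ℝ)..s, α τ * g τ))
          - ((∫ s in (0:ℝ)..r, lam * (c * β s))
            + ∫ s in (0:ℝ)..r, (c * β s) * (∫ τ in (0:ℝ)..s, β τ * g τ)) := by
      rw [← intervalIntegral.integral_add
          ((continuous_const.fun_mul (continuous_const.fun_mul βc)).intervalIntegrable _ _)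
          (((continuous_const.fun_mul βc).fun_mul Bcont).intervalIntegrable _ _),
        ← intervalIntegral.integral_sub ((αc.fun_mul Acont).intervalIntegrable _ _)
          (((continuous_const.fun_mul (continuous_const.fun_mul βc)).fun_add
            ((continuous_const.fun_mul βc).fun_mul Bcont)).intervalIntegrable _ _)]
      exact intervalIntegral.integral_congr (fun s _ => by ring)
    have w4 : ∫ s in (0:ℝ)..r, lam * (c * β s) = lam * (α r - 1) := by
      rw [intervalIntegral.integral_const_mul, ftcα 0 r, hα0]
    have hswap : ∫ τ in (0:ℝ)..r, β τ * (α τ * g τ)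
        = ∫ τ in (0:ℝ)..r, α τ * (β τ * g τ) :=
      intervalIntegral.integral_congr (fun τ _ => by ring)
    rw [sp, w4, e3 r hr, e4 r hr]
    linear_combination -hswap
  have Vcont : Continuous (fun s => α s * (∫ τ in (0:ℝ)..s, α τ * g τ)
      - c * β s * (lam + ∫ τ in (0:ℝ)..s, β τ * g τ)) :=
    (αc.mul Acont).sub (((continuous_const.mul βc)).mul (continuous_const.add Bcont))
  have claim2 : ∀ t : ℝ, 0 ≤ t → t ≤ 1 →
      (∫ s in t..(1:ℝ), (α s * (∫ τ in (0:ℝ)..s, α τ * g τ)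
        - c * β s * (lam + ∫ τ in (0:ℝ)..s, β τ * g τ))) = W t := by
    intro t h0 h1
    have hadj := intervalIntegral.integral_add_adjacent_intervals (μ := volume)
      (Vcont.intervalIntegrable 0 t) (Vcont.intervalIntegrable t 1)
    have hE0 := claim2E t h0
    have hE1 := claim2E 1 zero_le_one
    have hWt : W t = lam * α t + (α t * (∫ τ in (0:ℝ)..t, β τ * g τ)
        - β t * (∫ τ in (0:ℝ)..t, α τ * g τ)) := by simp only [hWdef]
    linarith [hadj, hE0, hE1, hWt, hlam1]
  -- the a.e. equation for u
  have hueq : ∀ᵐ t ∂(volume.restrict (Set.Ioo (0:ℝ) 1)),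
      u t + c * ∫ s in t..(1:ℝ), ∫ σ in (0:ℝ)..s, u σ = f t := by
    filter_upwards [ae_restrict_mem measurableSet_Ioo] with t ht
    have h0 : (0:ℝ) ≤ t := le_of_lt ht.1
    have h1 : t ≤ 1 := le_of_lt ht.2
    have hcongr : ∫ s in t..(1:ℝ), (∫ σ in (0:ℝ)..s, u σ)
        = ∫ s in t..(1:ℝ), (α s * (∫ τ in (0:ℝ)..s, α τ * g τ)
            - c * β s * (lam + ∫ τ in (0:ℝ)..s, β τ * g τ)) := by
      refine intervalIntegral.integral_congr (fun s hs => ?_)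
      rw [Set.uIcc_of_le h1] at hs
      exact claim1 s (le_trans h0 hs.1)
    rw [hcongr, claim2 t h0 h1]
    have hut : u t = g t - c * W t := by simp only [hudef]
    have hgt : g t = f t := by rw [hg]; exact Set.indicator_of_mem ht f
    rw [hut, hgt]
    ring
  -- membership in L²
  have hgm : MemLp g 2 (volume.restrict (Set.Ioo (0:ℝ) 1)) := by
    refine hf.ae_eq ?_
    filter_upwards [ae_restrict_mem measurableSet_Ioo] with t ht
    exact (Set.indicator_of_mem ht f).symm
  have hWm : MemLp W 2 (volume.restrict (Set.Ioo (0:ℝ) 1)) := by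
    obtain ⟨C, hC⟩ := (isCompact_Icc (a := (0:ℝ)) (b := 1)).exists_bound_of_continuousOn
      Wcont.continuousOn
    refine MemLp.of_bound Wcont.aestronglyMeasurable C ?_
    filter_upwards [ae_restrict_mem measurableSet_Ioo] with t ht
    exact hC t (Set.Ioo_subset_Icc_self ht)
  have hum : MemLp u 2 (volume.restrict (Set.Ioo (0:ℝ) 1)) := by
    have h := hgm.sub (hWm.const_mul c)
    refine h.ae_eq ?_
    filter_upwards with t
    simp only [hudef, Pi.sub_apply]
  refine ⟨u, hum, hueq, ?_⟩
  intro v hvm hveq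
  have hvi : Integrable v (volume.restrict (Set.Ioo (0:ℝ) 1)) := hvm.integrable one_le_two
  have hui2 : Integrable u (volume.restrict (Set.Ioo (0:ℝ) 1)) := hum.integrable one_le_two
  set w : ℝ → ℝ := (Set.Ioo (0:ℝ) 1).indicator (fun x => v x - u x) with hwdef
  have hwsupp : ∀ x, x ∉ Set.Ioo (0:ℝ) 1 → w x = 0 :=
    fun x hx => Set.indicator_of_notMem hx _
  have hwi : Integrable w volume :=
    (integrable_indicator_iff measurableSet_Ioo).2 (hvi.sub hui2)
  have Pwcont : Continuous (fun s => ∫ σ in (0:ℝ)..s, w σ) := hwi.continuous_primitive 0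
  set D : ℝ → ℝ := fun t => ∫ s in t..(1:ℝ), ∫ σ in (0:ℝ)..s, w σ with hDdef
  have hDderiv : ∀ t, HasDerivAt D (-(∫ σ in (0:ℝ)..t, w σ)) t := fun t =>
    intervalIntegral.integral_hasDerivAt_left (Pwcont.intervalIntegrable _ _)
      (Pwcont.stronglyMeasurableAtFilter _ _) Pwcont.continuousAt
  have Dd : Differentiable ℝ D := fun t => (hDderiv t).differentiableAt
  have Dcont : Continuous D := Dd.continuous
  have hIDderiv : ∀ t, HasDerivAt (fun r => ∫ σ in (0:ℝ)..r, D σ) (D t) t :=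
    fun t => (Dcont.integral_hasStrictDerivAt 0 t).hasDerivAt
  have IDcont : Continuous (fun r => ∫ σ in (0:ℝ)..r, D σ) :=
    (Dcont.intervalIntegrable : ∀ a b : ℝ, IntervalIntegrable D volume a b) |>
      (fun h => intervalIntegral.continuous_primitive h 0)
  set R : ℝ → ℝ := fun t => ∫ s in t..(1:ℝ), (∫ σ in (0:ℝ)..s, D σ) with hRdef
  have hRderiv : ∀ t, HasDerivAt R (-(∫ σ in (0:ℝ)..t, D σ)) t := fun t =>
    intervalIntegral.integral_hasDerivAt_left (IDcont.intervalIntegrable _ _)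
      (IDcont.stronglyMeasurableAtFilter _ _) IDcont.continuousAt
  have hne1 : ∀ᵐ x : ℝ ∂volume, x ≠ (1:ℝ) := by
    rw [MeasureTheory.ae_iff]
    have hset : {x : ℝ | ¬ x ≠ 1} = {1} := by ext x; simp
    rw [hset]
    exact Real.volume_singleton
  have Ucont : Continuous (fun s => ∫ σ in (0:ℝ)..s, u σ) :=
    intervalIntegral.continuous_primitive hu_ii 0
  have hinner : ∀ s : ℝ, 0 ≤ s → s ≤ 1 →
      ∫ σ in (0:ℝ)..s, v σ = (∫ σ in (0:ℝ)..s, u σ) + ∫ σ in (0:ℝ)..s, w σ := by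
    intro s h0 h1
    have hae : ∀ᵐ x ∂volume, x ∈ Set.uIoc (0:ℝ) s → v x = u x + w x := by
      filter_upwards [hne1] with x hx hmem
      rw [Set.uIoc_of_le h0] at hmem
      have hxI : x ∈ Set.Ioo (0:ℝ) 1 :=
        ⟨hmem.1, lt_of_le_of_ne (le_trans hmem.2 h1) hx⟩
      have hwx : w x = v x - u x := Set.indicator_of_mem hxI _
      rw [hwx]; ring
    rw [intervalIntegral.integral_congr_ae hae]
    exact intervalIntegral.integral_add (hu_ii 0 s) (hwi.intervalIntegrable)
  have hsplit : ∀ t : ℝ, 0 ≤ t → t ≤ 1 →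
      ∫ s in t..(1:ℝ), (∫ σ in (0:ℝ)..s, v σ)
        = (∫ s in t..(1:ℝ), (∫ σ in (0:ℝ)..s, u σ)) + D t := by
    intro t h0 h1
    have hcg : ∫ s in t..(1:ℝ), (∫ σ in (0:ℝ)..s, v σ)
        = ∫ s in t..(1:ℝ), ((∫ σ in (0:ℝ)..s, u σ) + ∫ σ in (0:ℝ)..s, w σ) := by
      refine intervalIntegral.integral_congr (fun s hs => ?_)
      rw [Set.uIcc_of_le h1] at hs
      exact hinner s (le_trans h0 hs.1) hs.2
    rw [hcg, intervalIntegral.integral_add (Ucont.intervalIntegrable _ _)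
      (Pwcont.intervalIntegrable _ _)]
  have hwD : ∀ᵐ t ∂(volume.restrict (Set.Ioo (0:ℝ) 1)), w t = -c * D t := by
    filter_upwards [hveq, hueq, ae_restrict_mem measurableSet_Ioo] with t hv he ht
    have h0 : (0:ℝ) ≤ t := le_of_lt ht.1
    have h1 : t ≤ 1 := le_of_lt ht.2
    have hs := hsplit t h0 h1
    have hwt : w t = v t - u t := Set.indicator_of_mem ht _
    rw [hs] at hv
    rw [hwt]
    linear_combination hv - he
  have hPwD : ∀ s : ℝ, 0 ≤ s → s ≤ 1 →
      ∫ σ in (0:ℝ)..s, w σ = -c * ∫ σ in (0:ℝ)..s, D σ := by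
    intro s h0 h1
    have hae : ∀ᵐ x ∂volume, x ∈ Set.uIoc (0:ℝ) s → w x = -c * D x := by
      have hres := (ae_restrict_iff' measurableSet_Ioo).1 hwD
      filter_upwards [hres] with x hx hmem
      rw [Set.uIoc_of_le h0] at hmem
      by_cases hxI : x ∈ Set.Ioo (0:ℝ) 1
      · exact hx hxI
      · have hx1 : x = 1 := by
          have hxle : x ≤ 1 := le_trans hmem.2 h1
          have hxpos : 0 < x := hmem.1
          by_contra hne
          exact hxI ⟨hxpos, lt_of_le_of_ne hxle hne⟩
        have hD1 : D 1 = 0 := intervalIntegral.integral_same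
        rw [hwsupp x hxI, hx1, hD1, mul_zero]
    rw [intervalIntegral.integral_congr_ae hae, intervalIntegral.integral_const_mul]
  have hDR : ∀ t : ℝ, 0 ≤ t → t ≤ 1 → D t = -c * R t := by
    intro t h0 h1
    have hcg : ∫ s in t..(1:ℝ), (∫ σ in (0:ℝ)..s, w σ)
        = ∫ s in t..(1:ℝ), (-c * ∫ σ in (0:ℝ)..s, D σ) := by
      refine intervalIntegral.integral_congr (fun s hs => ?_)
      rw [Set.uIcc_of_le h1] at hs
      exact hPwD s (le_trans h0 hs.1) hs.2
    have : D t = ∫ s in t..(1:ℝ), (-c * ∫ σ in (0:ℝ)..s, D σ) := by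
      rw [← hcg]
    rw [this, intervalIntegral.integral_const_mul]
  set Dt : ℝ → ℝ := fun t => -c * R t with hDtdef
  have hDtD : ∀ x : ℝ, 0 ≤ x → x ≤ 1 → Dt x = D x := fun x h0 h1 => (hDR x h0 h1).symm
  have hDt' : ∀ t, HasDerivAt Dt (-c * -(∫ σ in (0:ℝ)..t, D σ)) t :=
    fun t => (hRderiv t).const_mul (-c)
  have hInt' : ∀ t, HasDerivAt (fun r => c * ∫ σ in (0:ℝ)..r, D σ) (c * D t) t :=
    fun t => (hIDderiv t).const_mul c
  set φ2 : ℝ → ℝ := fun t => Dt t * (c * β t)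
      - (c * ∫ σ in (0:ℝ)..t, D σ) * α t with hφ2def
  set ψ2 : ℝ → ℝ := fun t => Dt t * α t
      - (c * ∫ σ in (0:ℝ)..t, D σ) * β t with hψ2def
  have hφ2d : ∀ t, HasDerivAt φ2
      ((-c * -(∫ σ in (0:ℝ)..t, D σ)) * (c * β t) + Dt t * (c * α t)
        - ((c * D t) * α t + (c * ∫ σ in (0:ℝ)..t, D σ) * (c * β t))) t :=
    fun t => ((hDt' t).mul ((hβ t).const_mul c)).sub ((hInt' t).mul (hα t))
  have hψ2d : ∀ t, HasDerivAt ψ2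
      ((-c * -(∫ σ in (0:ℝ)..t, D σ)) * α t + Dt t * (c * β t)
        - ((c * D t) * β t + (c * ∫ σ in (0:ℝ)..t, D σ) * α t)) t :=
    fun t => ((hDt' t).mul (hα t)).sub ((hInt' t).mul (hβ t))
  have hφ2diff : Differentiable ℝ φ2 := fun t => (hφ2d t).differentiableAt
  have hφ2cont : Continuous φ2 := hφ2diff.continuous
  have hψ2diff : Differentiable ℝ ψ2 := fun t => (hψ2d t).differentiableAt
  have hψ2cont : Continuous ψ2 := hψ2diff.continuous
  have hφ2const : ∀ x ∈ Set.Icc (0:ℝ) 1, φ2 x = φ2 0 := by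
    apply constant_of_has_deriv_right_zero hφ2cont.continuousOn
    intro x hx
    have hz : HasDerivAt φ2 0 x := by
      have hd := hφ2d x
      have he : (-c * -(∫ σ in (0:ℝ)..x, D σ)) * (c * β x) + Dt x * (c * α x)
          - ((c * D x) * α x + (c * ∫ σ in (0:ℝ)..x, D σ) * (c * β x)) = 0 := by
        rw [hDtD x hx.1 (le_of_lt hx.2)]
        ring
      rwa [he] at hd
    exact hz.hasDerivWithinAt
  have hψ2const : ∀ x ∈ Set.Icc (0:ℝ) 1, ψ2 x = ψ2 0 := by
    apply constant_of_has_deriv_right_zero hψ2cont.continuousOn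
    intro x hx
    have hz : HasDerivAt ψ2 0 x := by
      have hd := hψ2d x
      have he : (-c * -(∫ σ in (0:ℝ)..x, D σ)) * α x + Dt x * (c * β x)
          - ((c * D x) * β x + (c * ∫ σ in (0:ℝ)..x, D σ) * α x) = 0 := by
        rw [hDtD x hx.1 (le_of_lt hx.2)]
        ring
      rwa [he] at hd
    exact hz.hasDerivWithinAt
  have hφ20 : φ2 0 = 0 := by
    have : φ2 0 = Dt 0 * (c * β 0) - (c * ∫ σ in (0:ℝ)..0, D σ) * α 0 := rfl
    rw [this, hβ0, intervalIntegral.integral_same]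
    ring
  have hψ20 : ψ2 0 = Dt 0 := by
    have : ψ2 0 = Dt 0 * α 0 - (c * ∫ σ in (0:ℝ)..0, D σ) * β 0 := rfl
    rw [this, hα0, intervalIntegral.integral_same]
    ring
  have hDtform : ∀ x ∈ Set.Icc (0:ℝ) 1, Dt x = Dt 0 * α x := by
    intro x hx
    have heq1 : Dt x * (c * β x) - (c * ∫ σ in (0:ℝ)..x, D σ) * α x = 0 := by
      have := hφ2const x hx; rw [hφ20] at this; exact this
    have heq2 : Dt x * α x - (c * ∫ σ in (0:ℝ)..x, D σ) * β x = Dt 0 := by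
      have := hψ2const x hx; rw [hψ20] at this; exact this
    linear_combination α x * heq2 - β x * heq1 - Dt x * wr x
  have hDt1 : Dt 1 = 0 := by
    have : Dt 1 = -c * R 1 := rfl
    have hR1 : R 1 = 0 := intervalIntegral.integral_same
    rw [this, hR1, mul_zero]
  have hDt0 : Dt 0 = 0 := by
    have h := hDtform 1 ⟨zero_le_one, le_refl 1⟩
    rw [hDt1] at h
    rcases mul_eq_zero.1 h.symm with h' | h'
    · exact h'
    · exact absurd h' hα1
  filter_upwards [hwD, ae_restrict_mem measurableSet_Ioo] with t hwt ht
  have hDt0t : D t = 0 := by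
    rw [← hDtD t (le_of_lt ht.1) (le_of_lt ht.2),
      hDtform t ⟨le_of_lt ht.1, le_of_lt ht.2⟩, hDt0, zero_mul]
  have hwt0 : w t = 0 := by rw [hwt, hDt0t, mul_zero]
  have hwtv : w t = v t - u t := Set.indicator_of_mem ht _
  have : v t - u t = 0 := by rw [← hwtv]; exact hwt0
  linarith


/-- if `ab ∉ {−(π/2+kπ)² : k ∈ ℕ}`, then for every `f ∈ L²(0,1)` the
integral equation `u(t) + ab ∫ₜ¹ ∫₀ˢ u(σ) dσ ds = f(t)` has a unique solution
`u ∈ L²(0,1)` (unique up to a.e. equality). -/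
theorem integral_equation_solvable (a b : ℝ)
    (hab : ∀ k : ℕ, a * b ≠ -(Real.pi / 2 + k * Real.pi) ^ 2)
    (f : ℝ → ℝ) (hf : MemLp f 2 (volume.restrict (Set.Ioo (0:ℝ) 1))) :
    ∃ u : ℝ → ℝ, MemLp u 2 (volume.restrict (Set.Ioo (0:ℝ) 1)) ∧
      (∀ᵐ t ∂(volume.restrict (Set.Ioo (0:ℝ) 1)),
        u t + a * b * ∫ s in t..(1:ℝ), ∫ σ in (0:ℝ)..s, u σ = f t) ∧
      ∀ v : ℝ → ℝ, MemLp v 2 (volume.restrict (Set.Ioo (0:ℝ) 1)) →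
        (∀ᵐ t ∂(volume.restrict (Set.Ioo (0:ℝ) 1)),
          v t + a * b * ∫ s in t..(1:ℝ), ∫ σ in (0:ℝ)..s, v σ = f t) →
        v =ᵐ[volume.restrict (Set.Ioo (0:ℝ) 1)] u := by
  set c : ℝ := a * b with hc
  rcases lt_trichotomy c 0 with hneg | hzero | hpos
  · -- c < 0 : trigonometric case
    set r : ℝ := Real.sqrt (-c) with hr
    have hr2 : r ^ 2 = -c := Real.sq_sqrt (by linarith)
    have hrpos : 0 < r := Real.sqrt_pos.2 (by linarith)
    have hα : ∀ t : ℝ, HasDerivAt (fun t => Real.cos (r * t))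
        (c * (Real.sin (r * t) / r)) t := by
      intro t
      have hin : HasDerivAt (fun t : ℝ => r * t) r t := by
        simpa using (hasDerivAt_id t).const_mul r
      have := hin.cos
      convert this using 1
      field_simp
      linear_combination Real.sin (r * t) * hr2
    have hβ : ∀ t : ℝ, HasDerivAt (fun t => Real.sin (r * t) / r)
        (Real.cos (r * t)) t := by
      intro t
      have hin : HasDerivAt (fun t : ℝ => r * t) r t := by
        simpa using (hasDerivAt_id t).const_mul r
      have := hin.sin.div_const r
      exact this.congr_deriv (mul_div_cancel_right₀ _ hrpos.ne')
    have hα1 : Real.cos (r * 1) ≠ 0 := by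
      rw [mul_one]
      intro hcos
      rcases Real.cos_eq_zero_iff.1 hcos with ⟨n, hn⟩
      have hπ : 0 < Real.pi := Real.pi_pos
      have hn0 : 0 ≤ n := by
        by_contra hneg'
        push_neg at hneg'
        have hn1 : n ≤ -1 := by omega
        have hn1' : (n:ℝ) ≤ -1 := by exact_mod_cast hn1
        have : (2 * (n:ℝ) + 1) ≤ -1 := by linarith
        nlinarith [hrpos, hn]
      have hcast : ((n.toNat : ℕ) : ℝ) = (n : ℝ) := by
        exact_mod_cast congrArg Int.cast (Int.toNat_of_nonneg hn0)
      apply hab n.toNat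
      have : c = -(Real.pi / 2 + (n.toNat : ℝ) * Real.pi) ^ 2 := by
        rw [hcast]
        have : r = Real.pi / 2 + (n : ℝ) * Real.pi := by rw [hn]; ring
        nlinarith [hr2, this]
      exact this
    exact key_solvable c _ _ hα hβ (by simp) (by simp) hα1 f hf
  · -- c = 0
    have hα : ∀ t : ℝ, HasDerivAt (fun _ : ℝ => (1:ℝ)) (c * (id t)) t := by
      intro t
      rw [hzero, zero_mul]
      exact hasDerivAt_const t 1
    have hβ : ∀ t : ℝ, HasDerivAt (id : ℝ → ℝ) ((fun _ : ℝ => (1:ℝ)) t) t :=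
      fun t => hasDerivAt_id t
    exact key_solvable c _ _ hα hβ rfl rfl one_ne_zero f hf
  · -- c > 0 : hyperbolic case
    set r : ℝ := Real.sqrt c with hr
    have hr2 : r ^ 2 = c := Real.sq_sqrt (le_of_lt hpos)
    have hrpos : 0 < r := Real.sqrt_pos.2 hpos
    have hα : ∀ t : ℝ, HasDerivAt (fun t => Real.cosh (r * t))
        (c * (Real.sinh (r * t) / r)) t := by
      intro t
      have hin : HasDerivAt (fun t : ℝ => r * t) r t := by
        simpa using (hasDerivAt_id t).const_mul r
      have := hin.cosh
      convert this using 1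
      field_simp
      linear_combination (-Real.sinh (r * t)) * hr2
    have hβ : ∀ t : ℝ, HasDerivAt (fun t => Real.sinh (r * t) / r)
        (Real.cosh (r * t)) t := by
      intro t
      have hin : HasDerivAt (fun t : ℝ => r * t) r t := by
        simpa using (hasDerivAt_id t).const_mul r
      have := hin.sinh.div_const r
      exact this.congr_deriv (mul_div_cancel_right₀ _ hrpos.ne')
    have hα1 : Real.cosh (r * 1) ≠ 0 := ne_of_gt (Real.cosh_pos _)
    exact key_solvable c _ _ hα hβ (by simp) (by simp) hα1 f hf
end

section
/- Let a, b ∈ ℝ with b ≠ 0 and ab ∈ { −(π/2 + kπ)² : k ∈ ℕ }. Then there exists f ∈ L²(0,1;ℝ) such that the integral equation u(t) + ab ∫ₜ¹ ∫₀ˢ u(σ) dσ ds = f(t) has no solution u ∈ L²(0,1;ℝ). -/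
open MeasureTheory Set

set_option maxHeartbeats 1000000

-- Fubini-type swap over the triangle 0 < σ ≤ s ≤ 1.
lemma my_triangle_swap (φ ψ : ℝ → ℝ) (hφ : IntegrableOn φ (Set.Ioc 0 1) volume)
    (hψ : Continuous ψ) :
    ∫ s in Set.Ioc (0:ℝ) 1, (∫ σ in Set.Ioc (0:ℝ) s, φ σ) * ψ s
      = ∫ σ in Set.Ioc (0:ℝ) 1, φ σ * (∫ s in Set.Ioc σ 1, ψ s) := by
  set μ1 : Measure ℝ := volume.restrict (Set.Ioc 0 1) with hμ1
  haveI : IsFiniteMeasure μ1 := by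
    constructor
    rw [hμ1, Measure.restrict_apply_univ, Real.volume_Ioc]
    exact ENNReal.ofReal_lt_top
  have hψi : Integrable ψ μ1 := (hψ.integrableOn_Ioc : IntegrableOn ψ (Set.Ioc 0 1) volume)
  set F : ℝ × ℝ → ℝ := ({p : ℝ × ℝ | p.1 ≤ p.2}.indicator fun p => φ p.1 * ψ p.2) with hF
  have hFi : Integrable F (μ1.prod μ1) :=
    (hφ.mul_prod hψi).indicator (measurableSet_le measurable_fst measurable_snd)
  have swap := MeasureTheory.integral_integral_swap
    (f := fun σ s => F (σ, s)) (μ := μ1) (ν := μ1) hFi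
  have lhs_eq : (∫ σ, (∫ s, F (σ, s) ∂μ1) ∂μ1)
      = ∫ σ in Set.Ioc (0:ℝ) 1, φ σ * (∫ s in Set.Ioc σ 1, ψ s) := by
    rw [hμ1]
    refine setIntegral_congr_fun measurableSet_Ioc fun σ hσ => ?_
    have e1 : (fun s => F (σ, s)) = (Set.Ici σ).indicator (fun s => φ σ * ψ s) := by
      ext s
      by_cases h : σ ≤ s <;> simp [hF, Set.indicator, h]
    rw [e1, integral_indicator measurableSet_Ici,
      Measure.restrict_restrict measurableSet_Ici]
    have e2 : Set.Ici σ ∩ Set.Ioc (0:ℝ) 1 = Set.Icc σ 1 := by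
      ext x
      simp only [Set.mem_inter_iff, Set.mem_Ici, Set.mem_Ioc, Set.mem_Icc]
      constructor
      · rintro ⟨h1, _, h3⟩; exact ⟨h1, h3⟩
      · rintro ⟨h1, h2⟩; exact ⟨h1, lt_of_lt_of_le hσ.1 h1, h2⟩
    rw [e2, integral_Icc_eq_integral_Ioc, integral_const_mul]
  have rhs_eq : (∫ s, (∫ σ, F (σ, s) ∂μ1) ∂μ1)
      = ∫ s in Set.Ioc (0:ℝ) 1, (∫ σ in Set.Ioc (0:ℝ) s, φ σ) * ψ s := by
    rw [hμ1]
    refine setIntegral_congr_fun measurableSet_Ioc fun s hs => ?_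
    have e1 : (fun σ => F (σ, s)) = (Set.Iic s).indicator (fun σ => φ σ * ψ s) := by
      ext σ
      by_cases h : σ ≤ s <;> simp [hF, Set.indicator, h]
    rw [e1, integral_indicator measurableSet_Iic,
      Measure.restrict_restrict measurableSet_Iic]
    have e2 : Set.Iic s ∩ Set.Ioc (0:ℝ) 1 = Set.Ioc 0 s := by
      ext x
      simp only [Set.mem_inter_iff, Set.mem_Iic, Set.mem_Ioc]
      constructor
      · rintro ⟨h1, h2, _⟩; exact ⟨h2, h1⟩
      · rintro ⟨h1, h2⟩; exact ⟨h2, h1, le_trans h2 hs.2⟩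
    rw [e2, integral_mul_const]
  rw [← lhs_eq, ← rhs_eq, swap]

/-- if `b ≠ 0` and `ab ∈ {−(π/2+kπ)² : k ∈ ℕ}`, then there is
`f ∈ L²(0,1)` for which the integral equation
`u(t) + ab ∫ₜ¹ ∫₀ˢ u(σ) dσ ds = f(t)` has no solution `u ∈ L²(0,1)`. -/
theorem integral_equation_not_solvable (a b : ℝ) (hb : b ≠ 0)
    (hab : ∃ k : ℕ, a * b = -(Real.pi / 2 + k * Real.pi) ^ 2) :
    ∃ f : ℝ → ℝ, MemLp f 2 (volume.restrict (Set.Ioo (0:ℝ) 1)) ∧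
      ¬ ∃ u : ℝ → ℝ, MemLp u 2 (volume.restrict (Set.Ioo (0:ℝ) 1)) ∧
        ∀ᵐ t ∂(volume.restrict (Set.Ioo (0:ℝ) 1)),
          u t + a * b * ∫ s in t..(1:ℝ), ∫ σ in (0:ℝ)..s, u σ = f t := by
  obtain ⟨k, hk⟩ := hab
  set c : ℝ := Real.pi / 2 + k * Real.pi with hc
  have hπ := Real.pi_pos
  have hkπ : (0:ℝ) ≤ k * Real.pi := mul_nonneg (Nat.cast_nonneg k) hπ.le
  have hcpos : 0 < c := by rw [hc]; linarith
  have hcne : c ≠ 0 := ne_of_gt hcpos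
  have hcos : Real.cos c = 0 := by
    have : c = k * Real.pi + Real.pi / 2 := by rw [hc]; ring
    rw [this, Real.cos_add_pi_div_two, Real.sin_nat_mul_pi, neg_zero]
  have hsin2c : Real.sin (2 * c) = 0 := by
    have h2c : 2 * c = Real.pi + k * (2 * Real.pi) := by rw [hc]; ring
    rw [h2c, Real.sin_add_nat_mul_two_pi, Real.sin_pi]
  haveI hfin : IsFiniteMeasure (volume.restrict (Set.Ioo (0:ℝ) 1)) := by
    constructor
    rw [Measure.restrict_apply_univ, Real.volume_Ioo]
    exact ENNReal.ofReal_lt_top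
  have hcosc : Continuous fun t : ℝ => Real.cos (c * t) :=
    Real.continuous_cos.comp (continuous_const.mul continuous_id)
  refine ⟨fun t => Real.cos (c * t), ?_, ?_⟩
  · exact MemLp.of_bound hcosc.aestronglyMeasurable 1
      (Filter.Eventually.of_forall fun t => by
        rw [Real.norm_eq_abs]; exact Real.abs_cos_le_one _)
  rintro ⟨u, hu, heq⟩
  have huInt : IntegrableOn u (Set.Ioo 0 1) volume := hu.integrable one_le_two
  set v : ℝ → ℝ := (Set.Ioo (0:ℝ) 1).indicator u with hv
  have hvInt : Integrable v volume := huInt.integrable_indicator measurableSet_Ioo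
  set g : ℝ → ℝ := fun s => ∫ σ in (0:ℝ)..s, v σ with hgdef
  have hgc : Continuous g := hvInt.continuous_primitive 0
  -- the primitive of u agrees with that of v inside (0,1)
  have key1 : ∀ s : ℝ, 0 ≤ s → s ≤ 1 → (∫ σ in (0:ℝ)..s, u σ) = g s := by
    intro s h0 h1
    rw [hgdef]
    simp only [intervalIntegral.integral_of_le h0, integral_Ioc_eq_integral_Ioo]
    refine setIntegral_congr_fun measurableSet_Ioo fun σ hσ => ?_
    exact (Set.indicator_of_mem (Set.mem_Ioo.mpr ⟨hσ.1, lt_of_lt_of_le hσ.2 h1⟩) u).symm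
  set F : ℝ → ℝ := fun t => ∫ s in t..(1:ℝ), g s with hFdef
  have hFeq : F = fun t => -∫ s in (1:ℝ)..t, g s := by
    funext t; rw [hFdef]; exact (intervalIntegral.integral_symm 1 t)
  have hFc : Continuous F := by
    rw [hFeq]
    exact (intervalIntegral.continuous_primitive
      (fun a b => hgc.intervalIntegrable a b) 1).neg
  -- rewrite the equation a.e. using v and F
  have hae : ∀ᵐ t ∂(volume.restrict (Set.Ioo (0:ℝ) 1)),
      v t + a * b * F t = Real.cos (c * t) := by
    filter_upwards [heq, ae_restrict_mem measurableSet_Ioo] with t ht hmem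
    have h1 : v t = u t := Set.indicator_of_mem hmem u
    have h2 : (∫ s in t..(1:ℝ), ∫ σ in (0:ℝ)..s, u σ) = F t := by
      rw [hFdef]
      simp only [intervalIntegral.integral_of_le hmem.2.le,
        integral_Ioc_eq_integral_Ioo]
      refine setIntegral_congr_fun measurableSet_Ioo fun s hs => ?_
      exact key1 s (le_of_lt (lt_trans hmem.1 hs.1)) hs.2.le
    rw [h1, ← h2]
    exact ht
  -- integrability of the pieces
  have hInt1 : IntegrableOn (fun t => Real.cos (c * t) * v t) (Set.Ioo 0 1) volume :=
    (hvInt.restrict).bdd_mul hcosc.aestronglyMeasurable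
      (Filter.Eventually.of_forall fun x => by rw [Real.norm_eq_abs]; exact Real.abs_cos_le_one _)
  have hInt2 : IntegrableOn (fun t => F t * Real.cos (c * t)) (Set.Ioo 0 1) volume :=
    ((hFc.mul hcosc).integrableOn_Icc).mono_set Set.Ioo_subset_Icc_self
  have big : ∫ t in Set.Ioo (0:ℝ) 1, Real.cos (c * t) * (v t + a * b * F t)
      = ∫ t in Set.Ioo (0:ℝ) 1, Real.cos (c * t) * Real.cos (c * t) :=
    integral_congr_ae (by filter_upwards [hae] with t ht; rw [ht])
  have hsplit : ∫ t in Set.Ioo (0:ℝ) 1, Real.cos (c * t) * (v t + a * b * F t)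
      = (∫ t in Set.Ioo (0:ℝ) 1, Real.cos (c * t) * v t)
        + a * b * ∫ t in Set.Ioo (0:ℝ) 1, F t * Real.cos (c * t) := by
    have e : (fun t => Real.cos (c * t) * (v t + a * b * F t))
        = fun t => Real.cos (c * t) * v t + a * b * (F t * Real.cos (c * t)) := by
      funext t; ring
    rw [e, integral_add hInt1 (hInt2.const_mul (a * b)), integral_const_mul]
  -- integration by parts
  have hFderiv : ∀ x ∈ Set.uIcc (0:ℝ) 1, HasDerivAt F (-g x) x := by
    intro x _
    have h1 : HasDerivAt (fun t => ∫ s in (1:ℝ)..t, g s) (g x) x :=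
      intervalIntegral.integral_hasDerivAt_right (hgc.intervalIntegrable 1 x)
        (hgc.stronglyMeasurableAtFilter volume (nhds x)) hgc.continuousAt
    rw [hFeq]; exact h1.neg
  have hsinderiv : ∀ x ∈ Set.uIcc (0:ℝ) 1,
      HasDerivAt (fun y => Real.sin (c * y) / c) (Real.cos (c * x)) x := by
    intro x _
    have h1 : HasDerivAt (fun y : ℝ => c * y) c x := by
      simpa using (hasDerivAt_id x).const_mul c
    have h2 := ((Real.hasDerivAt_sin (c * x)).comp x h1).div_const c
    convert h2 using 1
    · rfl
    · rfl
    · rfl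
    · field_simp
  have hparts := intervalIntegral.integral_mul_deriv_eq_deriv_mul hFderiv hsinderiv
    ((hgc.neg).intervalIntegrable 0 1) (hcosc.intervalIntegrable 0 1)
  have hF1 : F 1 = 0 := intervalIntegral.integral_same
  have hA : ∫ x in (0:ℝ)..1, F x * Real.cos (c * x)
      = ∫ x in (0:ℝ)..1, g x * (Real.sin (c * x) / c) := by
    rw [hparts, hF1]
    simp [mul_zero, Real.sin_zero, zero_div, neg_mul, intervalIntegral.integral_neg]
  have conv1 : ∫ t in Set.Ioo (0:ℝ) 1, F t * Real.cos (c * t)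
      = ∫ x in (0:ℝ)..1, F x * Real.cos (c * x) := by
    rw [intervalIntegral.integral_of_le zero_le_one, integral_Ioc_eq_integral_Ioo]
  -- Fubini
  have hswap := my_triangle_swap v (fun s => Real.sin (c * s) / c) hvInt.integrableOn
    ((Real.continuous_sin.comp (continuous_const.mul continuous_id)).div_const c)
  have hgs : ∫ s in Set.Ioc (0:ℝ) 1, (∫ σ in Set.Ioc (0:ℝ) s, v σ) * (Real.sin (c * s) / c)
      = ∫ x in (0:ℝ)..1, g x * (Real.sin (c * x) / c) := by
    rw [intervalIntegral.integral_of_le zero_le_one]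
    refine setIntegral_congr_fun measurableSet_Ioc fun s hs => ?_
    exact (congrArg (fun z => z * (Real.sin (c * s) / c))
      (intervalIntegral.integral_of_le hs.1.le)).symm
  have hinner : ∀ σ ∈ Set.Ioc (0:ℝ) 1,
      (∫ s in Set.Ioc σ 1, Real.sin (c * s) / c) = Real.cos (c * σ) / c ^ 2 := by
    intro σ hσ
    rw [← intervalIntegral.integral_of_le hσ.2, intervalIntegral.integral_div,
      intervalIntegral.integral_comp_mul_left (fun x => Real.sin x) hcne,
      integral_sin, mul_one, hcos]
    rw [sub_zero, smul_eq_mul, inv_mul_eq_div, div_div, pow_two]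
  have hB : ∫ x in (0:ℝ)..1, g x * (Real.sin (c * x) / c)
      = (c ^ 2)⁻¹ * ∫ t in Set.Ioc (0:ℝ) 1, Real.cos (c * t) * v t := by
    rw [← hgs, hswap, ← integral_const_mul]
    refine setIntegral_congr_fun measurableSet_Ioc fun σ hσ => ?_
    rw [hinner σ hσ]; ring
  have conv2 : ∫ t in Set.Ioo (0:ℝ) 1, Real.cos (c * t) * v t
      = ∫ t in Set.Ioc (0:ℝ) 1, Real.cos (c * t) * v t :=
    (integral_Ioc_eq_integral_Ioo).symm
  have hRHS : ∫ t in Set.Ioo (0:ℝ) 1, Real.cos (c * t) * Real.cos (c * t) = 1 / 2 := by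
    rw [← integral_Ioc_eq_integral_Ioo, ← intervalIntegral.integral_of_le zero_le_one]
    have e : (fun t => Real.cos (c * t) * Real.cos (c * t))
        = fun t => Real.cos (c * t) ^ 2 := by funext t; ring
    rw [e, intervalIntegral.integral_comp_mul_left (fun x => Real.cos x ^ 2) hcne,
      mul_one, mul_zero, integral_cos_sq, hcos, smul_eq_mul]
    rw [Real.cos_zero, Real.sin_zero]
    field_simp
    ring
  have e1 := big
  rw [hsplit, hRHS, conv1, hA, hB, conv2] at e1
  set X := ∫ t in Set.Ioc (0:ℝ) 1, Real.cos (c * t) * v t with hX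
  have habX : a * b * ((c ^ 2)⁻¹ * X) = -X := by
    rw [hk]
    field_simp
  rw [habX] at e1
  norm_num at e1
end

section
/- For the 3×3 constant-coefficient system ∂_t y₁ − ∂_x y₁ = 0, ∂_t y₂ − (1/2) ∂_x y₂ = a y₁(t,0), ∂_t y₃ + ∂_x y₃ = b y₂(t,0) on (0,2)×(0,1) with boundary conditions y₁(t,1) = u₁(t), y₂(t,1) = u₂(t), y₃(t,0) = y₁(t,0): given that u₁ = 0 on (1,2) and u₂(t) = −a ∫ₜ² y₁(s,0) ds, the null controllability condition y₃(2,·) = 0 is equivalent to the integral equation u₁(t) + ab ∫ₜ¹ ∫₀ˢ u₁(σ) dσ ds = f(t) on (0,1), where f(t) = −b ∫_{1+t}² y₂⁰(s/2) ds − ab(1−t) ∫₀¹ y₁⁰(θ) dθ. -/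
open MeasureTheory

/-- for the 3×3 example system, with `u₁ = 0` on `(1,2)` and
`u₂(t) = −a ∫ₜ² y₁(s,0) ds`, the null controllability condition `y₃(2,·) = 0` is
equivalent to the integral equation
`u₁(t) + ab ∫ₜ¹ ∫₀ˢ u₁(σ) dσ ds = f(t)` on `(0,1)`, where
`f(t) = −b ∫_{1+t}² y₂⁰(s/2) ds − ab(1−t) ∫₀¹ y₁⁰(θ) dθ`. -/
theorem example_system_null_controllability_iff (a b : ℝ)
    (y10 y20 : ℝ → ℝ) (u1 u2 : ℝ → ℝ) (y1 y2 y3 : ℝ → ℝ → ℝ)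
    (hy10 : MemLp y10 2 (volume.restrict (Set.Ioo (0:ℝ) 1)))
    (hy20 : MemLp y20 2 (volume.restrict (Set.Ioo (0:ℝ) 1)))
    (hu1L2 : MemLp u1 2 (volume.restrict (Set.Ioo (0:ℝ) 2)))
    (hy1 : ∀ t x, y1 t x = if 0 < t - 1 + x then u1 (t - 1 + x) else y10 (t + x))
    (hy2 : ∀ t x, y2 t x =
      if 0 < t - 2 * (1 - x) then
        u2 (t - 2 * (1 - x)) + a * ∫ s in (t - 2 * (1 - x))..t, y1 s 0
      else
        y20 (t / 2 + x) + a * ∫ s in (0:ℝ)..t, y1 s 0)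
    (hy3 : ∀ t x, 0 < t - x → y3 t x = y1 (t - x) 0 + b * ∫ s in (t - x)..t, y2 s 0)
    (hu1 : ∀ t ∈ Set.Ioo (1:ℝ) 2, u1 t = 0)
    (hu2 : ∀ t ∈ Set.Ioo (0:ℝ) 2, u2 t = -a * ∫ s in t..(2:ℝ), y1 s 0) :
    (∀ x ∈ Set.Ioo (0:ℝ) 1, y3 2 x = 0) ↔
    (∀ t ∈ Set.Ioo (0:ℝ) 1,
      u1 t + a * b * ∫ s in t..(1:ℝ), ∫ σ in (0:ℝ)..s, u1 σ =
        -b * (∫ s in (1 + t)..(2:ℝ), y20 (s / 2)) -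
          a * b * (1 - t) * ∫ θ in (0:ℝ)..1, y10 θ) := by
  -- finiteness of the restricted measures
  have hfin2 : IsFiniteMeasure (volume.restrict (Set.Ioo (0:ℝ) 2)) :=
    ⟨by rw [Measure.restrict_apply_univ]; simp [Real.volume_Ioo]⟩
  have hfin1 : IsFiniteMeasure (volume.restrict (Set.Ioo (0:ℝ) 1)) :=
    ⟨by rw [Measure.restrict_apply_univ]; simp [Real.volume_Ioo]⟩
  have hu1I : IntegrableOn u1 (Set.Ioo 0 2) volume := hu1L2.integrable (by norm_num)
  have hy10I : IntegrableOn y10 (Set.Ioo 0 1) volume := hy10.integrable (by norm_num)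
  have hy20I : IntegrableOn y20 (Set.Ioo 0 1) volume := hy20.integrable (by norm_num)
  have hu1ii : ∀ c d : ℝ, 0 ≤ c → c ≤ d → d ≤ 2 → IntervalIntegrable u1 volume c d := by
    intro c d h0 hcd h2
    rw [intervalIntegrable_iff_integrableOn_Ioc_of_le hcd,
      integrableOn_Ioc_iff_integrableOn_Ioo]
    exact hu1I.mono_set (fun z hz => ⟨lt_of_le_of_lt h0 hz.1, lt_of_lt_of_le hz.2 h2⟩)
  have hy10ii : IntervalIntegrable y10 volume 0 1 := by
    rw [intervalIntegrable_iff_integrableOn_Ioc_of_le (by norm_num),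
      integrableOn_Ioc_iff_integrableOn_Ioo]
    exact hy10I
  have hy20half : ∀ c : ℝ, 0 ≤ c → c ≤ 2 → IntervalIntegrable (fun s => y20 (s/2)) volume c 2 := by
    intro c h0 h2
    have h : IntervalIntegrable y20 volume (c/2) 1 := by
      rw [intervalIntegrable_iff_integrableOn_Ioc_of_le (by linarith),
        integrableOn_Ioc_iff_integrableOn_Ioo]
      exact hy20I.mono_set (fun z hz => ⟨lt_of_le_of_lt (by linarith) hz.1, hz.2⟩)
    have h2' := h.comp_mul_right (c := 2⁻¹)
    have hb1 : c / 2 / 2⁻¹ = c := by field_simp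
    have hb2 : (1:ℝ) / 2⁻¹ = 2 := by norm_num
    rw [hb1, hb2] at h2'
    have hfun : (fun x : ℝ => y20 (x * 2⁻¹)) = fun s => y20 (s/2) := by
      funext x; rw [← div_eq_mul_inv]
    rwa [hfun] at h2'
  have hGcont : ContinuousOn (fun r => ∫ σ in (0:ℝ)..r, u1 σ) (Set.uIcc (0:ℝ) 1) := by
    apply intervalIntegral.continuousOn_primitive_interval
    rw [Set.uIcc_of_le (by norm_num : (0:ℝ) ≤ 1),
      integrableOn_Icc_iff_integrableOn_Ioo]
    exact hu1I.mono_set (fun z hz => ⟨hz.1, by linarith [hz.2]⟩)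
  -- the key computation
  have key : ∀ t ∈ Set.Ioo (0:ℝ) 1, y3 2 (1-t) =
      u1 t + a*b*(∫ s in t..(1:ℝ), ∫ σ in (0:ℝ)..s, u1 σ)
        + b*(∫ s in (1+t)..(2:ℝ), y20 (s/2))
        + a*b*(1-t)*(∫ θ in (0:ℝ)..1, y10 θ) := by
    intro t ht
    obtain ⟨ht0, ht1⟩ := ht
    rw [hy3 2 (1-t) (by linarith)]
    rw [hy1, if_pos (show (0:ℝ) < 2 - (1-t) - 1 + 0 by linarith)]
    rw [show (2:ℝ) - (1-t) - 1 + 0 = t by ring, show (2:ℝ) - (1-t) = 1 + t by ring]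
    -- split of the primitive of y1(·,0)
    have hsplit : ∀ s ∈ Set.uIcc (1+t) (2:ℝ), (∫ σ in (0:ℝ)..s, y1 σ 0)
        = (∫ θ in (0:ℝ)..1, y10 θ) + ∫ σ in (0:ℝ)..(s-1), u1 σ := by
      intro s hs
      rw [Set.uIcc_of_le (by linarith)] at hs
      obtain ⟨hs1, hs2⟩ := hs
      have hg1 : IntervalIntegrable (fun σ => y1 σ 0) volume 0 1 := by
        apply hy10ii.congr_ae
        filter_upwards [ae_restrict_mem measurableSet_uIoc] with σ hσ
        rw [Set.uIoc_of_le (by norm_num : (0:ℝ) ≤ 1)] at hσ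
        rw [hy1, if_neg (by push_neg; linarith [hσ.2]), add_zero]
      have hg2 : IntervalIntegrable (fun σ => y1 σ 0) volume 1 s := by
        have hu : IntervalIntegrable (fun σ => u1 (σ - 1)) volume (0+1) ((s-1)+1) :=
          (hu1ii 0 (s-1) le_rfl (by linarith) (by linarith)).comp_sub_right 1
        rw [show (0:ℝ)+1 = 1 by norm_num, show s-1+1 = s by ring] at hu
        apply hu.congr_ae
        filter_upwards [ae_restrict_mem measurableSet_uIoc] with σ hσ
        rw [Set.uIoc_of_le (by linarith)] at hσ
        rw [hy1, if_pos (by simpa using show (0:ℝ) < σ - 1 by linarith [hσ.1]), add_zero]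
      rw [← intervalIntegral.integral_add_adjacent_intervals hg1 hg2]
      congr 1
      · apply intervalIntegral.integral_congr
        intro σ hσ
        rw [Set.uIcc_of_le (by norm_num : (0:ℝ) ≤ 1)] at hσ
        show y1 σ 0 = y10 σ
        rw [hy1, if_neg (by push_neg; linarith [hσ.2]), add_zero]
      · have hcongr : ∫ σ in (1:ℝ)..s, y1 σ 0 = ∫ σ in (1:ℝ)..s, u1 (σ - 1) := by
          apply intervalIntegral.integral_congr_ae
          filter_upwards with σ hσ
          rw [Set.uIoc_of_le (by linarith)] at hσ
          rw [hy1, if_pos (by simpa using show (0:ℝ) < σ - 1 by linarith [hσ.1]), add_zero]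
        rw [hcongr, intervalIntegral.integral_comp_sub_right u1 1,
          show (1:ℝ) - 1 = 0 by norm_num]
    -- rewrite the integrand of the outer integral
    have hmain : (∫ s in (1+t)..(2:ℝ), y2 s 0)
        = ∫ s in (1+t)..(2:ℝ),
            (y20 (s/2) + a * ((∫ θ in (0:ℝ)..1, y10 θ) + ∫ σ in (0:ℝ)..(s-1), u1 σ)) := by
      apply intervalIntegral.integral_congr
      intro s hs
      have hs' := hs
      rw [Set.uIcc_of_le (by linarith)] at hs'
      show y2 s 0 = y20 (s/2) + a * ((∫ θ in (0:ℝ)..1, y10 θ) + ∫ σ in (0:ℝ)..(s-1), u1 σ)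
      rw [hy2, if_neg (by push_neg; linarith [hs'.2]), hsplit s hs]
      norm_num
    have hGint : IntervalIntegrable (fun s : ℝ => ∫ σ in (0:ℝ)..(s-1), u1 σ)
        volume (1+t) 2 := by
      apply ContinuousOn.intervalIntegrable
      apply hGcont.comp (Continuous.continuousOn (by continuity))
      intro s hs
      rw [Set.uIcc_of_le (by linarith)] at hs
      rw [Set.uIcc_of_le (by norm_num : (0:ℝ) ≤ 1)]
      simp only [Set.mem_Icc]
      exact ⟨by linarith [hs.1], by linarith [hs.2]⟩
    have hf1 : IntervalIntegrable (fun s => y20 (s/2)) volume (1+t) 2 :=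
      hy20half (1+t) (by linarith) (by linarith)
    have hf2 : IntervalIntegrable
        (fun s => a * ((∫ θ in (0:ℝ)..1, y10 θ) + ∫ σ in (0:ℝ)..(s-1), u1 σ))
        volume (1+t) 2 :=
      (intervalIntegrable_const.add hGint).const_mul a
    rw [hmain, intervalIntegral.integral_add hf1 hf2,
      intervalIntegral.integral_const_mul,
      intervalIntegral.integral_add intervalIntegrable_const hGint,
      intervalIntegral.integral_const,
      intervalIntegral.integral_comp_sub_right (fun r => ∫ σ in (0:ℝ)..r, u1 σ) 1,
      show (1:ℝ)+t-1 = t by ring, show (2:ℝ)-1 = 1 by norm_num]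
    simp only [smul_eq_mul]
    ring
  constructor
  · intro h t ht
    have hk := key t ht
    rw [h (1-t) ⟨by linarith [ht.2], by linarith [ht.1]⟩] at hk
    linarith [hk]
  · intro h x hx
    have hk := key (1-x) ⟨by linarith [hx.2], by linarith [hx.1]⟩
    have h' := h (1-x) ⟨by linarith [hx.2], by linarith [hx.1]⟩
    rw [show (1:ℝ) - (1-x) = x from by ring] at hk h'
    rw [hk]
    linarith [h']
end

section
/- Let P : E₁ → E₂ be a compact operator between Banach spaces, H a Hilbert space, and L : D → E₁ a linear map on a subspace D ⊂ H. Suppose (zₙ) ⊂ D is a sequence, (Sₙ) ⊂ H, and (wₙ) nonnegative reals with Sₙ depending on zₙ, satisfying: ‖L zₙ‖ ≤ C(‖Sₙ‖² + wₙ)^{1/2}, ‖Sₙ − Sₖ‖² ≤ C(wₙ + wₖ + ‖P L zₙ − P L zₖ‖²) for a suitable constant C, ‖Sₙ‖ = 1, wₙ → 0. Then (Sₙ) has a convergent subsequence with nonzero limit. -/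
/-- abstract extraction step of the compactness-uniqueness method:
from the two estimates, normalization `‖Sₙ‖ = 1` and `wₙ → 0`, one extracts a
subsequence of `(Sₙ)` converging to a nonzero limit. -/
theorem compactness_uniqueness_extraction {H E₁ E₂ : Type*}
    [NormedAddCommGroup H] [InnerProductSpace ℂ H] [CompleteSpace H]
    [NormedAddCommGroup E₁] [NormedSpace ℂ E₁] [CompleteSpace E₁]
    [NormedAddCommGroup E₂] [NormedSpace ℂ E₂] [CompleteSpace E₂]
    (P : E₁ →L[ℂ] E₂) (hP : IsCompactOperator P)
    (D : Submodule ℂ H) (L : D →ₗ[ℂ] E₁)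
    (z : ℕ → D) (S : ℕ → H) (w : ℕ → ℝ) (hw0 : ∀ n, 0 ≤ w n)
    (C : ℝ) (hC : 0 < C)
    (h1 : ∀ n, ‖L (z n)‖ ≤ C * Real.sqrt (‖S n‖ ^ 2 + w n))
    (h2 : ∀ n k, ‖S n - S k‖ ^ 2 ≤ C * (w n + w k + ‖P (L (z n)) - P (L (z k))‖ ^ 2))
    (hS : ∀ n, ‖S n‖ = 1)
    (hw : Filter.Tendsto w Filter.atTop (nhds 0)) :
    ∃ φ : ℕ → ℕ, StrictMono φ ∧ ∃ f : H, f ≠ 0 ∧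
      Filter.Tendsto (fun n => S (φ n)) Filter.atTop (nhds f) := by
  -- bound on w
  obtain ⟨M, hM⟩ := hw.bddAbove_range
  set R := C * Real.sqrt (1 + M) with hR
  have hLb : ∀ n, L (z n) ∈ Metric.closedBall (0 : E₁) R := by
    intro n
    simp only [Metric.mem_closedBall, dist_zero_right]
    calc ‖L (z n)‖ ≤ C * Real.sqrt (‖S n‖ ^ 2 + w n) := h1 n
      _ ≤ C * Real.sqrt (1 + M) := by
          apply mul_le_mul_of_nonneg_left _ hC.le
          apply Real.sqrt_le_sqrt
          have := hM (Set.mem_range_self n)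
          rw [hS n]; linarith
  -- compact operator: image of ball has compact closure
  have hK : IsCompact (closure ((P : E₁ →ₗ[ℂ] E₂) '' Metric.closedBall 0 R)) :=
    hP.isCompact_closure_image_of_bounded Metric.isBounded_closedBall
  have hmem : ∀ n, P (L (z n)) ∈ closure ((P : E₁ →ₗ[ℂ] E₂) '' Metric.closedBall 0 R) :=
    fun n => subset_closure ⟨_, hLb n, rfl⟩
  obtain ⟨y, -, φ, hφ, hconv⟩ := hK.tendsto_subseq hmem
  refine ⟨φ, hφ, ?_⟩
  have hg : CauchySeq (fun n => P (L (z (φ n)))) := hconv.cauchySeq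
  have hwφ : Filter.Tendsto (fun n => w (φ n)) Filter.atTop (nhds 0) :=
    hw.comp hφ.tendsto_atTop
  have hcauchy : CauchySeq (fun n => S (φ n)) := by
    rw [Metric.cauchySeq_iff]
    intro ε hε
    have hε3 : 0 < ε ^ 2 / (3 * C) := by positivity
    obtain ⟨N₁, hN₁⟩ := (Metric.tendsto_atTop.mp hwφ) (ε ^ 2 / (3 * C)) hε3
    obtain ⟨N₂, hN₂⟩ := Metric.cauchySeq_iff.mp hg (Real.sqrt (ε ^ 2 / (3 * C)))
      (Real.sqrt_pos.mpr hε3)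
    refine ⟨max N₁ N₂, fun m hm n hn => ?_⟩
    have hwm : w (φ m) < ε ^ 2 / (3 * C) := by
      have := hN₁ m (le_of_max_le_left hm)
      rwa [Real.dist_eq, sub_zero, abs_of_nonneg (hw0 _)] at this
    have hwn : w (φ n) < ε ^ 2 / (3 * C) := by
      have := hN₁ n (le_of_max_le_left hn)
      rwa [Real.dist_eq, sub_zero, abs_of_nonneg (hw0 _)] at this
    have hgmn : ‖P (L (z (φ m))) - P (L (z (φ n)))‖ ^ 2 < ε ^ 2 / (3 * C) := by
      have h := hN₂ m (le_of_max_le_right hm) n (le_of_max_le_right hn)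
      rw [dist_eq_norm] at h
      nlinarith [Real.sq_sqrt hε3.le, Real.sqrt_nonneg (ε ^ 2 / (3 * C)),
        norm_nonneg (P (L (z (φ m))) - P (L (z (φ n))))]
    have hb := h2 (φ m) (φ n)
    have hsq : ‖S (φ m) - S (φ n)‖ ^ 2 < ε ^ 2 := by
      have : C * (w (φ m) + w (φ n) + ‖P (L (z (φ m))) - P (L (z (φ n)))‖ ^ 2)
          < C * (3 * (ε ^ 2 / (3 * C))) := by
        apply mul_lt_mul_of_pos_left _ hC
        linarith
      have h3 : C * (3 * (ε ^ 2 / (3 * C))) = ε ^ 2 := by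
        field_simp
      linarith
    rw [dist_eq_norm]
    nlinarith [norm_nonneg (S (φ m) - S (φ n))]
  obtain ⟨f, hf⟩ := cauchySeq_tendsto_of_complete hcauchy
  refine ⟨f, ?_, hf⟩
  have hnorm : Filter.Tendsto (fun n => ‖S (φ n)‖) Filter.atTop (nhds ‖f‖) :=
    hf.norm
  have : ‖f‖ = 1 := by
    have : Filter.Tendsto (fun _ : ℕ => (1 : ℝ)) Filter.atTop (nhds ‖f‖) := by
      simpa [hS] using hnorm
    exact tendsto_nhds_unique this tendsto_const_nhds
  intro h0
  rw [h0, norm_zero] at this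
  norm_num at this
end
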